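/- arXiv:2604.07275 — 5 statements merged into one kernel-verified Lean document; each statement's English description precedes it below -/
import Mathlib

section
/- For λ>0, t≥0, and 0 < u ≤ 1, the probability generating function of N̂(t) satisfies Σ_{n=0}^∞ u^n ((λt)^{2n}/(2n)! + (λt)^{2n+1}/(2n+1)!) e^{−λt} = ((√u+1)/(2√u)) e^{−λ(1−√u)t} + ((√u−1)/(2√u)) e^{−λ(1+√u)t}. -/
lemma exp_tsum' (x : ℝ) : Real.exp x = ∑' n : ℕ, x ^ n / n.factorial := by
  rw [Real.exp_eq_exp_ℝ, NormedSpace.exp_eq_tsum_div]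

theorem stmt2 (l t u : ℝ) (hl : 0 < l) (ht : 0 ≤ t) (hu0 : 0 < u) (hu1 : u ≤ 1) :
    ∑' n : ℕ, u ^ n * ((l * t) ^ (2 * n) / ((2 * n).factorial : ℝ)
        + (l * t) ^ (2 * n + 1) / ((2 * n + 1).factorial : ℝ)) * Real.exp (-(l * t))
      = (Real.sqrt u + 1) / (2 * Real.sqrt u) * Real.exp (-(l * (1 - Real.sqrt u) * t))
        + (Real.sqrt u - 1) / (2 * Real.sqrt u) * Real.exp (-(l * (1 + Real.sqrt u) * t)) := by
  set s := Real.sqrt u with hs_def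
  have hs : 0 < s := Real.sqrt_pos.2 hu0
  have hs2 : s ^ 2 = u := Real.sq_sqrt hu0.le
  set x := l * t with hx_def
  set a := s * x with ha_def
  -- summability
  have hf : Summable (fun k : ℕ => a ^ k / k.factorial) := Real.summable_pow_div_factorial a
  have hinj2 : Function.Injective (fun n : ℕ => 2 * n) := fun m n h => by simpa using h
  have hinj2' : Function.Injective (fun n : ℕ => 2 * n + 1) := fun m n h => by simpa using h
  have hE : Summable (fun n : ℕ => a ^ (2 * n) / (2 * n).factorial) :=
    hf.comp_injective hinj2
  have hO : Summable (fun n : ℕ => a ^ (2 * n + 1) / (2 * n + 1).factorial) :=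
    hf.comp_injective hinj2'
  -- rewrite terms
  have hterm : ∀ n : ℕ, u ^ n * (x ^ (2 * n) / ((2 * n).factorial : ℝ)
      + x ^ (2 * n + 1) / ((2 * n + 1).factorial : ℝ))
      = a ^ (2 * n) / (2 * n).factorial + s⁻¹ * (a ^ (2 * n + 1) / (2 * n + 1).factorial) := by
    intro n
    have h1 : a ^ (2 * n) = u ^ n * x ^ (2 * n) := by
      rw [ha_def, mul_pow, pow_mul, hs2]
    have h2 : a ^ (2 * n + 1) = s * (u ^ n * x ^ (2 * n + 1)) := by
      rw [ha_def, mul_pow, pow_succ, mul_pow, pow_mul, hs2]; ring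
    rw [h1, h2]
    field_simp
  -- even/odd sums of exp(a) and exp(-a)
  have hexp1 : (∑' n : ℕ, a ^ (2 * n) / (2 * n).factorial)
      + (∑' n : ℕ, a ^ (2 * n + 1) / (2 * n + 1).factorial) = Real.exp a := by
    rw [exp_tsum' a]
    exact tsum_even_add_odd (f := fun k => a ^ k / k.factorial) hE hO
  have hexp2 : (∑' n : ℕ, a ^ (2 * n) / (2 * n).factorial)
      - (∑' n : ℕ, a ^ (2 * n + 1) / (2 * n + 1).factorial) = Real.exp (-a) := by
    rw [exp_tsum' (-a)]
    rw [← tsum_even_add_odd (f := fun k => (-a) ^ k / k.factorial) ((Real.summable_pow_div_factorial (-a)).comp_injective hinj2)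
      ((Real.summable_pow_div_factorial (-a)).comp_injective hinj2')]
    have he : ∀ n : ℕ, (-a) ^ (2 * n) / ((2 * n).factorial : ℝ)
        = a ^ (2 * n) / (2 * n).factorial := by
      intro n; rw [pow_mul, pow_mul, neg_pow, mul_pow]; norm_num
    have ho : ∀ n : ℕ, (-a) ^ (2 * n + 1) / ((2 * n + 1).factorial : ℝ)
        = -(a ^ (2 * n + 1) / (2 * n + 1).factorial) := by
      intro n; rw [Odd.neg_pow ⟨n, by ring⟩, neg_div]
    simp_rw [he, ho]
    rw [tsum_neg]
    ring
  set E := ∑' n : ℕ, a ^ (2 * n) / ((2 * n).factorial : ℝ)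
  set O := ∑' n : ℕ, a ^ (2 * n + 1) / ((2 * n + 1).factorial : ℝ)
  calc (∑' n : ℕ, u ^ n * (x ^ (2 * n) / ((2 * n).factorial : ℝ)
        + x ^ (2 * n + 1) / ((2 * n + 1).factorial : ℝ)) * Real.exp (-x))
      = (∑' n : ℕ, (a ^ (2 * n) / ((2 * n).factorial : ℝ)
          + s⁻¹ * (a ^ (2 * n + 1) / (2 * n + 1).factorial))) * Real.exp (-x) := by
        rw [tsum_mul_right]
        congr 1
        exact tsum_congr hterm
    _ = (E + s⁻¹ * O) * Real.exp (-x) := by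
        rw [Summable.tsum_add hE (hO.mul_left s⁻¹), tsum_mul_left]
    _ = _ := by
        have hEv : E = (Real.exp a + Real.exp (-a)) / 2 := by
          rw [← hexp1, ← hexp2]; ring
        have hOv : O = (Real.exp a - Real.exp (-a)) / 2 := by
          rw [← hexp1, ← hexp2]; ring
        have e1 : Real.exp (-(l * (1 - s) * t)) = Real.exp (-x) * Real.exp a := by
          rw [← Real.exp_add]; congr 1; rw [hx_def, ha_def, hx_def]; ring
        have e2 : Real.exp (-(l * (1 + s) * t)) = Real.exp (-x) * Real.exp (-a) := by
          rw [← Real.exp_add]; congr 1; rw [hx_def, ha_def, hx_def]; ring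
        rw [hEv, hOv, e1, e2]
        field_simp
        ring
end

section
/- For α>0, β>0, ζ>0, γ>0, σ>0, a ∈ ℝ and x>0, the convolution identity ∫_0^x (x−t)^{β−1} E^γ_{α,β}(a(x−t)^α) · t^{ζ−1} E^σ_{α,ζ}(a t^α) dt = x^{β+ζ−1} E^{γ+σ}_{α,β+ζ}(a x^α) holds. -/
open Real MeasureTheory Filter Finset

noncomputable def ml3 (α β γ x : ℝ) : ℝ :=
  if γ = 0 then 1 / Real.Gamma β
  else (1 / Real.Gamma γ) *
    ∑' j : ℕ, Real.Gamma ((j : ℝ) + γ) * x ^ j / ((j.factorial : ℝ) * Real.Gamma ((j : ℝ) * α + β))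

namespace MLaux

/-- Ascending factorial (Pochhammer) `y(y+1)...(y+n-1)`. -/
noncomputable def P (y : ℝ) : ℕ → ℝ
  | 0 => 1
  | n + 1 => P y n * (y + n)

lemma P_pos {y : ℝ} (hy : 0 < y) (n : ℕ) : 0 < P y n := by
  induction n with
  | zero => norm_num [P]
  | succ n ih => exact mul_pos ih (by positivity)

lemma Gamma_eq_P {y : ℝ} (hy : 0 < y) (n : ℕ) :
    Real.Gamma (n + y) = P y n * Real.Gamma y := by
  induction n with
  | zero => simp [P]
  | succ n ih =>
      have h : ((n + 1 : ℕ) : ℝ) + y = ((n : ℝ) + y) + 1 := by push_cast; ring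
      rw [h, Real.Gamma_add_one (by positivity), ih, P]
      ring

lemma vandermonde (γ σ : ℝ) (n : ℕ) :
    ∑ j ∈ Finset.range (n + 1), (n.choose j : ℝ) * (P γ j * P σ (n - j)) = P (γ + σ) n := by
  induction n with
  | zero => simp [P]
  | succ n ih =>
      rw [Finset.sum_range_succ']
      have hA : ∀ i ∈ Finset.range (n+1),
          ((n+1).choose (i+1) : ℝ) * (P γ (i+1) * P σ (n + 1 - (i+1)))
            = (n.choose i : ℝ) * (P γ i * P σ (n - i)) * (γ + i)
              + (n.choose (i+1) : ℝ) * (P γ (i+1) * P σ (n - i)) := by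
        intro i hi
        have h : n + 1 - (i+1) = n - i := by omega
        rw [h, Nat.choose_succ_succ, P]
        push_cast; ring
      rw [Finset.sum_congr rfl hA, Finset.sum_add_distrib]
      have hB : (∑ i ∈ Finset.range (n+1), (n.choose (i+1) : ℝ) * (P γ (i+1) * P σ (n - i)))
            + ((n+1).choose 0 : ℝ) * (P γ 0 * P σ (n + 1 - 0))
          = ∑ j ∈ Finset.range (n+1),
              (n.choose j : ℝ) * (P γ j * P σ (n - j)) * (σ + ((n - j : ℕ) : ℝ)) := by
        rw [Finset.sum_range_succ' (fun j => (n.choose j : ℝ) * (P γ j * P σ (n - j))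
              * (σ + ((n - j : ℕ) : ℝ))) n]
        congr 1
        · rw [Finset.sum_range_succ]
          simp only [Nat.choose_succ_self, Nat.cast_zero, zero_mul, add_zero]
          refine Finset.sum_congr rfl fun i hi => ?_
          have hi' : i < n := Finset.mem_range.mp hi
          have h1 : n - i = (n - i - 1) + 1 := by omega
          have h2 : n - (i+1) = n - i - 1 := by omega
          rw [h1, h2, show P σ ((n - i - 1) + 1) = P σ (n - i - 1) * (σ + (n - i - 1 : ℕ)) from rfl]
          ring
        · simp [P]
      rw [add_assoc, hB]
      rw [← Finset.sum_add_distrib]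
      have key : ∀ j ∈ Finset.range (n+1),
          (n.choose j : ℝ) * (P γ j * P σ (n - j)) * (γ + j)
            + (n.choose j : ℝ) * (P γ j * P σ (n - j)) * (σ + ((n - j : ℕ) : ℝ))
          = (γ + σ + n) * ((n.choose j : ℝ) * (P γ j * P σ (n - j))) := by
        intro j hj
        have hj' : j ≤ n := Nat.lt_succ_iff.mp (Finset.mem_range.mp hj)
        have h : ((n - j : ℕ) : ℝ) = (n : ℝ) - j := by
          rw [Nat.cast_sub hj']
        rw [h]; ring
      rw [Finset.sum_congr rfl key, ← Finset.mul_sum, ih, P]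
      ring

lemma vandermonde' (γ σ : ℝ) (n : ℕ) :
    ∑ p ∈ Finset.HasAntidiagonal.antidiagonal n,
        P γ p.1 * P σ p.2 / (p.1.factorial * p.2.factorial)
      = P (γ + σ) n / n.factorial := by
  rw [Finset.Nat.sum_antidiagonal_eq_sum_range_succ_mk]
  rw [eq_div_iff (by positivity)]
  rw [Finset.sum_mul, ← vandermonde γ σ n]
  refine Finset.sum_congr rfl fun j hj => ?_
  have hj' : j ≤ n := Nat.lt_succ_iff.mp (Finset.mem_range.mp hj)
  have h : (n.factorial : ℝ) = (n.choose j : ℝ) * (j.factorial * (n - j).factorial) := by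
    rw [← Nat.choose_mul_factorial_mul_factorial hj']
    push_cast; ring
  rw [h]
  have h1 : (j.factorial : ℝ) ≠ 0 := by positivity
  have h2 : ((n - j).factorial : ℝ) ≠ 0 := by positivity
  field_simp

lemma gautschi {α : ℝ} (hα : 0 < α) (hα1 : α ≤ 1) {y : ℝ} (hy : 0 < y) :
    Real.Gamma y * y ≤ Real.Gamma (y + α) * (y + α) ^ (1 - α) := by
  have hyα : 0 < y + α := by linarith
  have hG1 : (0:ℝ) < Real.Gamma (y+α) := Real.Gamma_pos_of_pos hyα
  have hG2 : (0:ℝ) < Real.Gamma (y+α+1) := Real.Gamma_pos_of_pos (by linarith)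
  have hG3 : (0:ℝ) < Real.Gamma (y+1) := Real.Gamma_pos_of_pos (by linarith)
  have h := Real.convexOn_log_Gamma.2 (Set.mem_Ioi.mpr hyα)
      (Set.mem_Ioi.mpr (by linarith : (0:ℝ) < y + α + 1))
      hα.le (by linarith : (0:ℝ) ≤ 1 - α) (by ring)
  have h2 : Real.log (Real.Gamma (y+1)) ≤
      α * Real.log (Real.Gamma (y+α)) + (1-α) * Real.log (Real.Gamma (y+α+1)) := by
    have e : α * (y+α) + (1-α) * (y+α+1) = y + 1 := by ring
    simpa [e, Function.comp, smul_eq_mul] using h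
  have key : Real.Gamma (y+1) ≤ Real.Gamma (y+α) ^ α * Real.Gamma (y+α+1) ^ (1-α) := by
    calc Real.Gamma (y+1) = Real.exp (Real.log (Real.Gamma (y+1))) := (Real.exp_log hG3).symm
    _ ≤ Real.exp (α * Real.log (Real.Gamma (y+α)) + (1-α) * Real.log (Real.Gamma (y+α+1))) :=
        Real.exp_le_exp.mpr h2
    _ = _ := by
        rw [Real.exp_add, Real.rpow_def_of_pos hG1, Real.rpow_def_of_pos hG2]
        ring_nf
  have e4 : Real.Gamma (y+α) ^ α * Real.Gamma (y+α) ^ (1-α) = Real.Gamma (y+α) := by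
    rw [← Real.rpow_add hG1]; norm_num
  have e2 : Real.Gamma (y+α+1) = (y+α) * Real.Gamma (y+α) := Real.Gamma_add_one hyα.ne'
  rw [e2, Real.mul_rpow hyα.le hG1.le] at key
  calc Real.Gamma y * y = Real.Gamma (y+1) := by
        rw [Real.Gamma_add_one hy.ne']; ring
  _ ≤ Real.Gamma (y+α) ^ α * ((y+α) ^ (1-α) * Real.Gamma (y+α) ^ (1-α)) := key
  _ = Real.Gamma (y+α) * (y+α) ^ (1-α) := by
      linear_combination (y+α)^(1-α) * e4

lemma ratio_tendsto_aux {α : ℝ} (hα : 0 < α) (hα1 : α ≤ 1) :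
    Tendsto (fun y : ℝ => Real.Gamma y / Real.Gamma (y + α)) atTop (nhds 0) := by
  have hg : Tendsto (fun y : ℝ => 2 ^ (1-α) * y ^ (-α)) atTop (nhds 0) := by
    simpa using (tendsto_rpow_neg_atTop hα).const_mul ((2:ℝ) ^ (1-α))
  refine squeeze_zero' ?_ ?_ hg
  · filter_upwards [eventually_gt_atTop (0:ℝ)] with y hy
    exact div_nonneg (Real.Gamma_pos_of_pos hy).le (Real.Gamma_pos_of_pos (by linarith)).le
  · filter_upwards [eventually_ge_atTop (max 2 α)] with y hy
    have hy2 : (2:ℝ) ≤ y := le_trans (le_max_left _ _) hy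
    have hyα : α ≤ y := le_trans (le_max_right _ _) hy
    have hy0 : (0:ℝ) < y := by linarith
    have hG : (0:ℝ) < Real.Gamma (y+α) := Real.Gamma_pos_of_pos (by linarith)
    have h1 : Real.Gamma y / Real.Gamma (y+α) ≤ (y+α) ^ (1-α) / y := by
      rw [div_le_div_iff₀ hG hy0]
      calc Real.Gamma y * y ≤ Real.Gamma (y+α) * (y+α) ^ (1-α) := gautschi hα hα1 hy0
      _ = (y+α) ^ (1-α) * Real.Gamma (y+α) := mul_comm _ _
    refine h1.trans ?_
    have h3 : (y+α) ^ (1-α) ≤ 2 ^ (1-α) * y ^ (1-α) := by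
      rw [← Real.mul_rpow (by norm_num) hy0.le]
      exact Real.rpow_le_rpow (by linarith) (by linarith) (by linarith)
    have hyα0 : y ^ α ≠ 0 := (Real.rpow_pos_of_pos hy0 α).ne'
    calc (y+α) ^ (1-α) / y ≤ 2 ^ (1-α) * y ^ (1-α) / y := by gcongr
    _ = 2 ^ (1-α) * y ^ (-α) := by
        rw [mul_div_assoc]
        congr 1
        rw [Real.rpow_sub hy0, Real.rpow_one, Real.rpow_neg hy0.le]
        field_simp

lemma ratio_tendsto {α : ℝ} (hα : 0 < α) :
    Tendsto (fun y : ℝ => Real.Gamma y / Real.Gamma (y + α)) atTop (nhds 0) := by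
  have hm : 0 < min α 1 := lt_min hα one_pos
  refine squeeze_zero' ?_ ?_ (ratio_tendsto_aux hm (min_le_right _ _))
  · filter_upwards [eventually_gt_atTop (0:ℝ)] with y hy
    exact div_nonneg (Real.Gamma_pos_of_pos hy).le (Real.Gamma_pos_of_pos (by linarith)).le
  · filter_upwards [eventually_ge_atTop (2:ℝ)] with y hy
    have hmono : Real.Gamma (y + min α 1) ≤ Real.Gamma (y + α) := by
      refine Real.Gamma_strictMonoOn_Ici.monotoneOn ?_ ?_ (by simp [min_le_left])
      · exact Set.mem_Ici.mpr (by have := hm; linarith)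
      · exact Set.mem_Ici.mpr (by linarith)
    have hGpos : 0 < Real.Gamma (y + min α 1) := Real.Gamma_pos_of_pos (by linarith)
    exact div_le_div_of_nonneg_left (Real.Gamma_pos_of_pos (by linarith : (0:ℝ) < y)).le
      hGpos hmono

lemma norm_T {α β γ : ℝ} (hα : 0 < α) (hβ : 0 < β) (hγ : 0 < γ) (r : ℝ) (k : ℕ) :
    ‖Real.Gamma ((k:ℝ)+γ) * r^k / ((k.factorial:ℝ) * Real.Gamma ((k:ℝ)*α+β))‖
      = Real.Gamma ((k:ℝ)+γ) * |r|^k / ((k.factorial:ℝ) * Real.Gamma ((k:ℝ)*α+β)) := by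
  have h1 : 0 < Real.Gamma ((k:ℝ)+γ) := Real.Gamma_pos_of_pos (by positivity)
  have h2 : 0 < Real.Gamma ((k:ℝ)*α+β) := Real.Gamma_pos_of_pos (by positivity)
  have h3 : (0:ℝ) < (k.factorial:ℝ) := by positivity
  rw [Real.norm_eq_abs, abs_div, abs_mul, abs_pow, abs_of_pos h1,
    abs_of_pos (mul_pos h3 h2)]

lemma summable_T {α β γ : ℝ} (hα : 0 < α) (hβ : 0 < β) (hγ : 0 < γ) (r : ℝ) :
    Summable (fun j : ℕ => Real.Gamma ((j : ℝ) + γ) * r ^ j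
      / ((j.factorial : ℝ) * Real.Gamma ((j : ℝ) * α + β))) := by
  set M : ℝ := (1 + γ) * (|r| + 1) with hM
  have hM0 : 0 < M := by positivity
  set δ : ℝ := 1 / (2 * M) with hδ
  have hδ0 : 0 < δ := by positivity
  have htend : Tendsto (fun j : ℕ => ((j:ℝ) * α + β)) atTop atTop :=
    tendsto_atTop_add_const_right atTop β
      ((tendsto_natCast_atTop_atTop).atTop_mul_const hα)
  have hrt : Tendsto (fun j : ℕ =>
      Real.Gamma ((j:ℝ)*α+β) / Real.Gamma (((j:ℝ)*α+β) + α)) atTop (nhds 0) :=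
    (ratio_tendsto hα).comp htend
  refine summable_of_ratio_norm_eventually_le (r := 1/2) (by norm_num) ?_
  filter_upwards [hrt.eventually (gt_mem_nhds hδ0)] with j hj
  have hGj : 0 < Real.Gamma ((j:ℝ)+γ) := Real.Gamma_pos_of_pos (by positivity)
  have hGd : 0 < Real.Gamma ((j:ℝ)*α+β) := Real.Gamma_pos_of_pos (by positivity)
  have hGd1 : 0 < Real.Gamma (((j:ℝ)*α+β)+α) := Real.Gamma_pos_of_pos (by positivity)
  have hf0 : (0:ℝ) < (j.factorial : ℝ) := by positivity
  have e1 : Real.Gamma (((j+1:ℕ):ℝ)+γ) = ((j:ℝ)+γ) * Real.Gamma ((j:ℝ)+γ) := by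
    push_cast
    rw [show (j:ℝ)+1+γ = ((j:ℝ)+γ)+1 by ring, Real.Gamma_add_one (by positivity)]
  have e3 : (((j+1:ℕ):ℝ))*α+β = ((j:ℝ)*α+β)+α := by push_cast; ring
  rw [norm_T hα hβ hγ, norm_T hα hβ hγ]
  have efac : (((j+1).factorial : ℕ):ℝ) = ((j:ℝ)+1) * (j.factorial : ℝ) := by
    rw [Nat.factorial_succ]; push_cast; ring
  rw [e1, e3, efac, pow_succ]
  have heq : ((j:ℝ)+γ) * Real.Gamma ((j:ℝ)+γ) * (|r|^j * |r|)
      / ((((j:ℝ)+1) * (j.factorial:ℝ)) * Real.Gamma (((j:ℝ)*α+β)+α))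
      = (Real.Gamma ((j:ℝ)+γ) * |r|^j / ((j.factorial:ℝ) * Real.Gamma ((j:ℝ)*α+β)))
        * ((((j:ℝ)+γ)/((j:ℝ)+1)) * |r|
          * (Real.Gamma ((j:ℝ)*α+β) / Real.Gamma (((j:ℝ)*α+β)+α))) := by
    field_simp
  rw [heq]
  have hfirst : (0:ℝ) ≤ Real.Gamma ((j:ℝ)+γ) * |r|^j / ((j.factorial:ℝ) * Real.Gamma ((j:ℝ)*α+β)) :=
    div_nonneg (mul_nonneg hGj.le (pow_nonneg (abs_nonneg r) j)) (mul_nonneg hf0.le hGd.le)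
  have hb1 : ((j:ℝ)+γ)/((j:ℝ)+1) ≤ 1+γ := by
    rw [div_le_iff₀ (by positivity)]
    nlinarith [Nat.cast_nonneg (α := ℝ) j]
  have hb : (((j:ℝ)+γ)/((j:ℝ)+1)) * |r|
      * (Real.Gamma ((j:ℝ)*α+β) / Real.Gamma (((j:ℝ)*α+β)+α)) ≤ (1+γ) * (|r|+1) * δ := by
    have h1 : (((j:ℝ)+γ)/((j:ℝ)+1)) * |r| ≤ (1+γ) * (|r|+1) :=
      mul_le_mul hb1 (by linarith [abs_nonneg r]) (abs_nonneg r) (by positivity)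
    exact mul_le_mul h1 hj.le (div_nonneg hGd.le hGd1.le) (by positivity)
  have hδval : (1+γ) * (|r|+1) * δ = 1/2 := by
    rw [hδ, hM]
    have h1 : (1+γ) ≠ 0 := by positivity
    have h2 : (|r|+1) ≠ 0 := by positivity
    field_simp
  calc (Real.Gamma ((j:ℝ)+γ) * |r|^j / ((j.factorial:ℝ) * Real.Gamma ((j:ℝ)*α+β)))
        * ((((j:ℝ)+γ)/((j:ℝ)+1)) * |r|
          * (Real.Gamma ((j:ℝ)*α+β) / Real.Gamma (((j:ℝ)*α+β)+α)))
      ≤ (Real.Gamma ((j:ℝ)+γ) * |r|^j / ((j.factorial:ℝ) * Real.Gamma ((j:ℝ)*α+β)))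
        * ((1+γ)*(|r|+1)*δ) := mul_le_mul_of_nonneg_left hb hfirst
  _ = _ := by rw [hδval]; ring

lemma beta_integrable {p q x : ℝ} (hp : 0 < p) (hq : 0 < q) (hx : 0 < x) :
    IntervalIntegrable (fun t => (x - t) ^ (p-1) * t ^ (q-1)) volume 0 x := by
  have h1 : IntervalIntegrable (fun t => (x - t) ^ (p-1) * t ^ (q-1)) volume 0 (x/2) := by
    have hf : IntervalIntegrable (fun t : ℝ => t ^ (q-1)) volume 0 (x/2) :=
      intervalIntegral.intervalIntegrable_rpow' (by linarith)
    have hg : ContinuousOn (fun t : ℝ => (x - t) ^ (p-1)) (Set.uIcc 0 (x/2)) := by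
      apply ContinuousOn.rpow_const
      · exact (continuous_const.sub continuous_id).continuousOn
      · intro t ht
        rw [Set.uIcc_of_le (by linarith)] at ht
        left
        have h1 := ht.1; have h2 := ht.2
        intro h; nlinarith
    exact hf.continuousOn_mul hg
  have h2 : IntervalIntegrable (fun t => (x - t) ^ (p-1) * t ^ (q-1)) volume (x/2) x := by
    have hf0 : IntervalIntegrable (fun t : ℝ => t ^ (p-1)) volume (x/2) 0 :=
      intervalIntegral.intervalIntegrable_rpow' (by linarith)
    have hf : IntervalIntegrable (fun t : ℝ => (x - t) ^ (p-1)) volume (x/2) x := by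
      have := hf0.comp_sub_left x
      simpa [show x - x/2 = x/2 from by ring] using this
    have hg : ContinuousOn (fun t : ℝ => t ^ (q-1)) (Set.uIcc (x/2) x) := by
      apply ContinuousOn.rpow_const continuousOn_id
      intro t ht
      rw [Set.uIcc_of_le (by linarith)] at ht
      left
      have h1 := ht.1
      simp only [id_eq]
      intro h; nlinarith
    exact hf.mul_continuousOn hg
  exact h1.trans h2

lemma beta_eval {p q x : ℝ} (hp : 0 < p) (hq : 0 < q) (hx : 0 < x) :
    ∫ t in (0:ℝ)..x, (x - t) ^ (p-1) * t ^ (q-1)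
      = Real.Gamma p * Real.Gamma q / Real.Gamma (p+q) * x ^ (p+q-1) := by
  have hC := Complex.betaIntegral_scaled (q:ℂ) (p:ℂ) hx
  have hG := Complex.Gamma_mul_Gamma_eq_betaIntegral
    (by simpa using hq : 0 < (q:ℂ).re) (by simpa using hp : 0 < (p:ℂ).re)
  have hGne : Complex.Gamma ((q:ℂ)+(p:ℂ)) ≠ 0 := by
    rw [show (q:ℂ)+(p:ℂ) = ((q+p:ℝ):ℂ) by push_cast; ring, Complex.Gamma_ofReal]
    exact_mod_cast Real.Gamma_ne_zero (fun m => by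
      have : (0:ℝ) < q + p := by linarith
      have h2 : (0:ℝ) ≤ (m:ℝ) := Nat.cast_nonneg m
      intro hcon; rw [hcon] at this; linarith)
  -- real integral = re of complex integral
  have hcongr : ∀ t ∈ Set.uIcc (0:ℝ) x,
      (((x - t) ^ (p-1) * t ^ (q-1) : ℝ) : ℂ)
        = (t:ℂ) ^ ((q:ℂ) - 1) * ((x:ℂ) - t) ^ ((p:ℂ) - 1) := by
    intro t ht
    rw [Set.uIcc_of_le hx.le] at ht
    rw [Complex.ofReal_mul, Complex.ofReal_cpow (by linarith [ht.2] : (0:ℝ) ≤ x - t),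
      Complex.ofReal_cpow ht.1]
    push_cast
    ring
  have hofreal : ∫ t in (0:ℝ)..x, (t:ℂ) ^ ((q:ℂ) - 1) * ((x:ℂ) - t) ^ ((p:ℂ) - 1)
      = ((∫ t in (0:ℝ)..x, (x - t) ^ (p-1) * t ^ (q-1) : ℝ) : ℂ) := by
    rw [← intervalIntegral.integral_ofReal]
    exact intervalIntegral.integral_congr (fun t ht => (hcongr t ht).symm)
  rw [hofreal] at hC
  have hbeta : Complex.betaIntegral (q:ℂ) (p:ℂ)
      = Complex.Gamma (q:ℂ) * Complex.Gamma (p:ℂ) / Complex.Gamma ((q:ℂ)+(p:ℂ)) := by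
    rw [hG]; field_simp
  rw [hbeta] at hC
  have hxc : ((x:ℂ)) ^ ((q:ℂ) + (p:ℂ) - 1) = ((x ^ (p+q-1) : ℝ) : ℂ) := by
    rw [Complex.ofReal_cpow hx.le]
    push_cast
    ring_nf
  rw [hxc] at hC
  have : (((∫ t in (0:ℝ)..x, (x - t) ^ (p-1) * t ^ (q-1) : ℝ)) : ℂ)
      = ((Real.Gamma p * Real.Gamma q / Real.Gamma (p+q) * x ^ (p+q-1) : ℝ) : ℂ) := by
    rw [hC]
    rw [show (q:ℂ)+(p:ℂ) = ((q+p:ℝ):ℂ) by push_cast; ring]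
    rw [Complex.Gamma_ofReal, Complex.Gamma_ofReal, Complex.Gamma_ofReal]
    push_cast
    rw [show q + p = p + q by ring]
    ring
  exact_mod_cast this

noncomputable def Kc (α β ζ γ σ b : ℝ) (p : ℕ × ℕ) : ℝ :=
  (Real.Gamma ((p.1:ℝ) + γ) * b ^ p.1 / ((p.1.factorial:ℝ) * Real.Gamma ((p.1:ℝ) * α + β))) *
  (Real.Gamma ((p.2:ℝ) + σ) * b ^ p.2 / ((p.2.factorial:ℝ) * Real.Gamma ((p.2:ℝ) * α + ζ)))

noncomputable def Gf (α β ζ γ σ b x : ℝ) (n : ℕ) (t : ℝ) : ℝ :=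
  ∑ p ∈ Finset.HasAntidiagonal.antidiagonal n,
    Kc α β ζ γ σ b p * ((x - t) ^ ((p.1:ℝ) * α + β - 1) * t ^ ((p.2:ℝ) * α + ζ - 1))

lemma xsplit {x : ℝ} (hx : 0 < x) (α e : ℝ) (n : ℕ) :
    x ^ ((n:ℝ)*α+e-1) = (x^α)^n * x^(e-1) := by
  rw [show (n:ℝ)*α+e-1 = α*(n:ℝ)+(e-1) by ring, Real.rpow_add hx, Real.rpow_mul hx.le,
    Real.rpow_natCast]

lemma Gf_integrable {α β ζ γ σ x : ℝ} (hα : 0 < α) (hβ : 0 < β) (hζ : 0 < ζ) (hx : 0 < x)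
    (b : ℝ) (n : ℕ) :
    IntegrableOn (fun t => Gf α β ζ γ σ b x n t) (Set.Ioc 0 x) volume := by
  apply integrable_finset_sum
  intro p hp
  apply Integrable.const_mul
  have h := beta_integrable (p := (p.1:ℝ)*α+β) (q := (p.2:ℝ)*α+ζ)
    (by positivity) (by positivity) hx
  rw [intervalIntegrable_iff_integrableOn_Ioc_of_le hx.le] at h
  exact h

lemma Gf_integral {α β ζ γ σ x : ℝ} (hα : 0 < α) (hβ : 0 < β) (hζ : 0 < ζ)
    (hγ : 0 < γ) (hσ : 0 < σ) (hx : 0 < x) (b : ℝ) (n : ℕ) :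
    ∫ t in Set.Ioc 0 x, Gf α β ζ γ σ b x n t
      = Real.Gamma γ * Real.Gamma σ * P (γ+σ) n * b ^ n * x ^ ((n:ℝ)*α+(β+ζ)-1)
        / ((n.factorial:ℝ) * Real.Gamma ((n:ℝ)*α+(β+ζ))) := by
  rw [← intervalIntegral.integral_of_le hx.le]
  simp only [Gf]
  rw [intervalIntegral.integral_finset_sum
    (f := fun (p : ℕ × ℕ) (t : ℝ) =>
      Kc α β ζ γ σ b p * ((x - t) ^ ((p.1:ℝ) * α + β - 1) * t ^ ((p.2:ℝ) * α + ζ - 1)))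
    (fun p hp =>
    ((beta_integrable (p := (p.1:ℝ)*α+β) (q := (p.2:ℝ)*α+ζ)
      (by positivity) (by positivity) hx).const_mul _))]
  have heval : ∀ p ∈ Finset.HasAntidiagonal.antidiagonal n,
      ∫ t in (0:ℝ)..x, Kc α β ζ γ σ b p * ((x - t) ^ ((p.1:ℝ)*α+β-1) * t ^ ((p.2:ℝ)*α+ζ-1))
        = (Real.Gamma γ * Real.Gamma σ * b ^ n * x ^ ((n:ℝ)*α+(β+ζ)-1)
            / Real.Gamma ((n:ℝ)*α+(β+ζ)))
          * (P γ p.1 * P σ p.2 / ((p.1.factorial:ℝ) * (p.2.factorial:ℝ))) := by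
    intro p hp
    rw [intervalIntegral.integral_const_mul,
      beta_eval (p := (p.1:ℝ)*α+β) (q := (p.2:ℝ)*α+ζ) (by positivity) (by positivity) hx]
    have hpn : p.1 + p.2 = n := Finset.HasAntidiagonal.mem_antidiagonal.mp hp
    have hcastn : ((p.1:ℝ)) + ((p.2:ℝ)) = (n:ℝ) := by exact_mod_cast congrArg Nat.cast hpn
    have hcast : ((p.1:ℝ)*α+β) + ((p.2:ℝ)*α+ζ) = (n:ℝ)*α+(β+ζ) := by
      linear_combination α * hcastn
    have hb : b ^ p.1 * b ^ p.2 = b ^ n := by rw [← pow_add, hpn]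
    rw [hcast, Kc, Gamma_eq_P hγ p.1, Gamma_eq_P hσ p.2, ← hb]
    have h1 : Real.Gamma ((p.1:ℝ)*α+β) ≠ 0 := (Real.Gamma_pos_of_pos (by positivity)).ne'
    have h2 : Real.Gamma ((p.2:ℝ)*α+ζ) ≠ 0 := (Real.Gamma_pos_of_pos (by positivity)).ne'
    have h3 : (p.1.factorial:ℝ) ≠ 0 := by positivity
    have h4 : (p.2.factorial:ℝ) ≠ 0 := by positivity
    have h5 : Real.Gamma ((n:ℝ)*α+(β+ζ)) ≠ 0 := (Real.Gamma_pos_of_pos (by positivity)).ne'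
    field_simp
  rw [Finset.sum_congr rfl heval, ← Finset.mul_sum, vandermonde']
  have h5 : Real.Gamma ((n:ℝ)*α+(β+ζ)) ≠ 0 := (Real.Gamma_pos_of_pos (by positivity)).ne'
  have h6 : (n.factorial:ℝ) ≠ 0 := by positivity
  field_simp

lemma rpow_term {α : ℝ} {w : ℝ} (hw : 0 < w) (e c : ℝ) (j : ℕ) :
    w ^ (e-1) * (c * w ^ α) ^ j = c ^ j * w ^ ((j:ℝ)*α + e - 1) := by
  calc w ^ (e-1) * (c * w ^ α) ^ j = c ^ j * (w ^ (e-1) * w ^ (α * (j:ℝ))) := by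
        rw [mul_pow, ← Real.rpow_natCast (w ^ α) j, ← Real.rpow_mul hw.le]; ring
  _ = c ^ j * w ^ ((j:ℝ)*α + e - 1) := by
      rw [← Real.rpow_add hw, show e-1+α*(j:ℝ) = (j:ℝ)*α+e-1 from by ring]

lemma pointwise {α β ζ γ σ x : ℝ} (hα : 0 < α) (hβ : 0 < β) (hζ : 0 < ζ) (hγ : 0 < γ)
    (hσ : 0 < σ) (hx : 0 < x) (b : ℝ) {t : ℝ} (ht : t ∈ Set.Ioo 0 x) :
    (x - t) ^ (β - 1) * ml3 α β γ (b * (x - t) ^ α) * (t ^ (ζ - 1) * ml3 α ζ σ (b * t ^ α))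
      = (Real.Gamma γ)⁻¹ * (Real.Gamma σ)⁻¹ * ∑' n, Gf α β ζ γ σ b x n t := by
  obtain ⟨ht0, htx⟩ := ht
  have hxt : 0 < x - t := by linarith
  rw [ml3, if_neg hγ.ne', ml3, if_neg hσ.ne']
  have hsum1 : Summable fun j : ℕ =>
      ‖(x - t) ^ (β-1) * (Real.Gamma ((j:ℝ)+γ) * (b * (x-t)^α) ^ j
        / ((j.factorial:ℝ) * Real.Gamma ((j:ℝ)*α+β)))‖ := by
    refine Summable.congr ((summable_T hα hβ hγ |b * (x-t)^α|).mul_left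
      ‖(x - t) ^ (β-1)‖) fun j => ?_
    rw [norm_mul, norm_T hα hβ hγ]
  have hsum2 : Summable fun k : ℕ =>
      ‖t ^ (ζ-1) * (Real.Gamma ((k:ℝ)+σ) * (b * t^α) ^ k
        / ((k.factorial:ℝ) * Real.Gamma ((k:ℝ)*α+ζ)))‖ := by
    refine Summable.congr ((summable_T hα hζ hσ |b * t^α|).mul_left
      ‖t ^ (ζ-1)‖) fun k => ?_
    rw [norm_mul, norm_T hα hζ hσ]
  calc (x - t) ^ (β - 1) * ((1 / Real.Gamma γ) * ∑' j : ℕ, Real.Gamma ((j:ℝ)+γ)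
          * (b * (x-t)^α) ^ j / ((j.factorial:ℝ) * Real.Gamma ((j:ℝ)*α+β)))
        * (t ^ (ζ - 1) * ((1 / Real.Gamma σ) * ∑' k : ℕ, Real.Gamma ((k:ℝ)+σ)
          * (b * t^α) ^ k / ((k.factorial:ℝ) * Real.Gamma ((k:ℝ)*α+ζ))))
      = (Real.Gamma γ)⁻¹ * (Real.Gamma σ)⁻¹
        * ((∑' j : ℕ, (x - t) ^ (β-1) * (Real.Gamma ((j:ℝ)+γ) * (b * (x-t)^α) ^ j
            / ((j.factorial:ℝ) * Real.Gamma ((j:ℝ)*α+β))))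
          * (∑' k : ℕ, t ^ (ζ-1) * (Real.Gamma ((k:ℝ)+σ) * (b * t^α) ^ k
            / ((k.factorial:ℝ) * Real.Gamma ((k:ℝ)*α+ζ))))) := by
        rw [tsum_mul_left, tsum_mul_left]
        ring
  _ = (Real.Gamma γ)⁻¹ * (Real.Gamma σ)⁻¹ * ∑' n, Gf α β ζ γ σ b x n t := by
      rw [tsum_mul_tsum_eq_tsum_sum_antidiagonal_of_summable_norm hsum1 hsum2]
      congr 1
      refine tsum_congr fun n => ?_
      refine Finset.sum_congr rfl fun p hp => ?_
      have e1 : (x - t) ^ (β-1) * (b * (x-t)^α) ^ p.1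
          = b ^ p.1 * (x-t) ^ ((p.1:ℝ)*α+β-1) := rpow_term hxt β b p.1
      have e2 : t ^ (ζ-1) * (b * t^α) ^ p.2
          = b ^ p.2 * t ^ ((p.2:ℝ)*α+ζ-1) := rpow_term ht0 ζ b p.2
      simp only [Kc]
      linear_combination
        (Real.Gamma ((p.1:ℝ)+γ) / ((p.1.factorial:ℝ) * Real.Gamma ((p.1:ℝ)*α+β))
          * (Real.Gamma ((p.2:ℝ)+σ) / ((p.2.factorial:ℝ) * Real.Gamma ((p.2:ℝ)*α+ζ)))
          * (t ^ (ζ-1) * (b * t^α) ^ p.2)) * e1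
        + (Real.Gamma ((p.1:ℝ)+γ) / ((p.1.factorial:ℝ) * Real.Gamma ((p.1:ℝ)*α+β))
          * (Real.Gamma ((p.2:ℝ)+σ) / ((p.2.factorial:ℝ) * Real.Gamma ((p.2:ℝ)*α+ζ)))
          * (b ^ p.1 * (x-t) ^ ((p.1:ℝ)*α+β-1))) * e2

lemma Kc_abs {α β ζ γ σ : ℝ} (hα : 0 < α) (hβ : 0 < β) (hζ : 0 < ζ) (hγ : 0 < γ) (hσ : 0 < σ)
    (b : ℝ) (p : ℕ × ℕ) : |Kc α β ζ γ σ b p| = Kc α β ζ γ σ |b| p := by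
  rw [Kc, Kc, abs_mul, ← Real.norm_eq_abs (Real.Gamma ((p.1:ℝ) + γ) * b ^ p.1 / _),
    ← Real.norm_eq_abs (Real.Gamma ((p.2:ℝ) + σ) * b ^ p.2 / _),
    norm_T hα hβ hγ, norm_T hα hζ hσ]

lemma Gf_abs_le {α β ζ γ σ x : ℝ} (hα : 0 < α) (hβ : 0 < β) (hζ : 0 < ζ) (hγ : 0 < γ)
    (hσ : 0 < σ) (b : ℝ) (n : ℕ) {t : ℝ} (ht1 : 0 ≤ t) (ht2 : t ≤ x) :
    ‖Gf α β ζ γ σ b x n t‖ ≤ Gf α β ζ γ σ |b| x n t := by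
  refine (norm_sum_le _ _).trans ?_
  apply Finset.sum_le_sum
  intro p hp
  rw [norm_mul]
  have hbase : (0:ℝ) ≤ (x - t) ^ ((p.1:ℝ)*α+β-1) * t ^ ((p.2:ℝ)*α+ζ-1) :=
    mul_nonneg (Real.rpow_nonneg (by linarith) _) (Real.rpow_nonneg ht1 _)
  rw [Real.norm_eq_abs, Real.norm_eq_abs, abs_of_nonneg hbase,
    Kc_abs hα hβ hζ hγ hσ]

lemma summable_W {α β ζ γ σ x : ℝ} (hα : 0 < α) (hβ : 0 < β) (hζ : 0 < ζ) (hγ : 0 < γ)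
    (hσ : 0 < σ) (hx : 0 < x) (b : ℝ) :
    Summable (fun n : ℕ => Real.Gamma γ * Real.Gamma σ * P (γ+σ) n * b ^ n
      * x ^ ((n:ℝ)*α+(β+ζ)-1) / ((n.factorial:ℝ) * Real.Gamma ((n:ℝ)*α+(β+ζ)))) := by
  have hγσ : 0 < γ + σ := by linarith
  have h := (summable_T hα (show (0:ℝ) < β + ζ by linarith) hγσ (b * x ^ α)).mul_left
    (Real.Gamma γ * Real.Gamma σ * x ^ (β+ζ-1) / Real.Gamma (γ+σ))
  refine h.congr fun n => ?_
  rw [Gamma_eq_P hγσ n, mul_pow, xsplit hx α (β+ζ) n]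
  have h1 : Real.Gamma (γ+σ) ≠ 0 := (Real.Gamma_pos_of_pos hγσ).ne'
  have h2 : (n.factorial:ℝ) ≠ 0 := by positivity
  have h3 : Real.Gamma ((n:ℝ)*α+(β+ζ)) ≠ 0 := (Real.Gamma_pos_of_pos (by positivity)).ne'
  field_simp

end MLaux

theorem stmt5 (α β ζ γ σ a x : ℝ) (hα : 0 < α) (hβ : 0 < β) (hζ : 0 < ζ) (hγ : 0 < γ)
    (hσ : 0 < σ) (hx : 0 < x) :
    (∫ t in (0 : ℝ)..x,
        (x - t) ^ (β - 1) * ml3 α β γ (a * (x - t) ^ α) * (t ^ (ζ - 1) * ml3 α ζ σ (a * t ^ α)))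
      = x ^ (β + ζ - 1) * ml3 α (β + ζ) (γ + σ) (a * x ^ α) := by
  have hγσ : 0 < γ + σ := by linarith
  have hβζ : 0 < β + ζ := by linarith
  have hΓγ : (0:ℝ) < Real.Gamma γ := Real.Gamma_pos_of_pos hγ
  have hΓσ : (0:ℝ) < Real.Gamma σ := Real.Gamma_pos_of_pos hσ
  have hΓγσ : (0:ℝ) < Real.Gamma (γ+σ) := Real.Gamma_pos_of_pos hγσ
  rw [intervalIntegral.integral_of_le hx.le, MeasureTheory.integral_Ioc_eq_integral_Ioo,
    MeasureTheory.setIntegral_congr_fun measurableSet_Ioo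
      (fun t ht => MLaux.pointwise hα hβ hζ hγ hσ hx a ht),
    MeasureTheory.integral_const_mul _ _]
  have hint : ∀ n : ℕ, Integrable (fun t => MLaux.Gf α β ζ γ σ a x n t)
      (volume.restrict (Set.Ioo 0 x)) :=
    fun n => ((MLaux.Gf_integrable hα hβ hζ hx a n).mono_set Set.Ioo_subset_Ioc_self)
  have hsumnorm : Summable fun n => ∫ t in Set.Ioo (0:ℝ) x, ‖MLaux.Gf α β ζ γ σ a x n t‖ := by
    refine Summable.of_nonneg_of_le (fun n => integral_nonneg fun t => norm_nonneg _)
      (fun n => ?_) (MLaux.summable_W hα hβ hζ hγ hσ hx |a|)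
    have hmono : ∫ t in Set.Ioo (0:ℝ) x, ‖MLaux.Gf α β ζ γ σ a x n t‖
        ≤ ∫ t in Set.Ioo (0:ℝ) x, MLaux.Gf α β ζ γ σ |a| x n t := by
      refine MeasureTheory.setIntegral_mono_on ((hint n).norm)
        ((MLaux.Gf_integrable hα hβ hζ hx |a| n).mono_set Set.Ioo_subset_Ioc_self)
        measurableSet_Ioo ?_
      intro t ht
      exact MLaux.Gf_abs_le hα hβ hζ hγ hσ a n ht.1.le ht.2.le
    refine hmono.trans ?_
    rw [← MeasureTheory.integral_Ioc_eq_integral_Ioo,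
      MLaux.Gf_integral hα hβ hζ hγ hσ hx |a| n]
  rw [← MeasureTheory.integral_tsum_of_summable_integral_norm hint hsumnorm]
  have heval : ∀ n : ℕ, ∫ t in Set.Ioo (0:ℝ) x, MLaux.Gf α β ζ γ σ a x n t
      = Real.Gamma γ * Real.Gamma σ * MLaux.P (γ+σ) n * a ^ n * x ^ ((n:ℝ)*α+(β+ζ)-1)
        / ((n.factorial:ℝ) * Real.Gamma ((n:ℝ)*α+(β+ζ))) := fun n => by
    rw [← MeasureTheory.integral_Ioc_eq_integral_Ioo]
    exact MLaux.Gf_integral hα hβ hζ hγ hσ hx a n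
  rw [tsum_congr heval, ml3, if_neg hγσ.ne']
  have hL : (Real.Gamma γ)⁻¹ * (Real.Gamma σ)⁻¹
      * (∑' n : ℕ, Real.Gamma γ * Real.Gamma σ * MLaux.P (γ+σ) n * a ^ n
          * x ^ ((n:ℝ)*α+(β+ζ)-1) / ((n.factorial:ℝ) * Real.Gamma ((n:ℝ)*α+(β+ζ))))
      = ∑' n : ℕ, MLaux.P (γ+σ) n * a ^ n * (x^α)^n * x^(β+ζ-1)
          / ((n.factorial:ℝ) * Real.Gamma ((n:ℝ)*α+(β+ζ))) := by
    rw [← tsum_mul_left]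
    refine tsum_congr fun n => ?_
    rw [MLaux.xsplit hx α (β+ζ) n]
    have h2 : (n.factorial:ℝ) ≠ 0 := by positivity
    have h3 : Real.Gamma ((n:ℝ)*α+(β+ζ)) ≠ 0 := (Real.Gamma_pos_of_pos (by positivity)).ne'
    field_simp
  have hR : x ^ (β+ζ-1) * ((1 / Real.Gamma (γ+σ))
      * ∑' n : ℕ, Real.Gamma ((n:ℝ) + (γ+σ)) * (a * x^α) ^ n
          / ((n.factorial:ℝ) * Real.Gamma ((n:ℝ)*α+(β+ζ))))
      = ∑' n : ℕ, MLaux.P (γ+σ) n * a ^ n * (x^α)^n * x^(β+ζ-1)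
          / ((n.factorial:ℝ) * Real.Gamma ((n:ℝ)*α+(β+ζ))) := by
    rw [← tsum_mul_left, ← tsum_mul_left]
    refine tsum_congr fun n => ?_
    rw [MLaux.Gamma_eq_P hγσ n, mul_pow]
    have h2 : (n.factorial:ℝ) ≠ 0 := by positivity
    have h3 : Real.Gamma ((n:ℝ)*α+(β+ζ)) ≠ 0 := (Real.Gamma_pos_of_pos (by positivity)).ne'
    field_simp
  rw [hL, ← hR]
end

section
/- For λ>0, t≥0 and every integer n≥0, the identity λ^{2n} t^{2nα} E^{2n+1}_{α,2nα+1}(−λt^α) + λ^{2n+1} t^{(2n+1)α} E^{2n+2}_{α,(2n+1)α+1}(−λt^α) = λ^{2n} t^{2nα} E^{2n}_{α,2nα+1}(−λt^α) − λ^{2n+2} t^{2(n+1)α} E^{2n+2}_{α,2(n+1)α+1}(−λt^α) holds, i.e. the Beghin–Orsingher pmf of N̂_α(t) coincides with the Cahoy–Polito pmf of N^{α,2}(t). -/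
open Filter in
private lemma gautschi {α : ℝ} (hα0 : 0 < α) (hα1 : α ≤ 1) {y : ℝ} (hy : 0 < y) :
    y * Real.Gamma y ≤ Real.Gamma (y + α) * (y + α) ^ (1 - α : ℝ) := by
  rcases eq_or_lt_of_le hα1 with h1 | h1
  · subst h1
    rw [Real.Gamma_add_one hy.ne', sub_self, Real.rpow_zero, mul_one]
  · have hb : (0:ℝ) < 1 - α := by linarith
    have h := Real.Gamma_mul_add_mul_le_rpow_Gamma_mul_rpow_Gamma
      (s := y + α) (t := y + 1 + α) (a := α) (b := 1 - α)
      (by linarith) (by linarith) hα0 hb (by ring)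
    have harg : α * (y + α) + (1 - α) * (y + 1 + α) = y + 1 := by ring
    rw [harg] at h
    have hG : Real.Gamma (y + 1 + α) = (y + α) * Real.Gamma (y + α) := by
      rw [show y + 1 + α = (y + α) + 1 by ring, Real.Gamma_add_one (by positivity)]
    rw [hG] at h
    have hGpos : 0 < Real.Gamma (y + α) := Real.Gamma_pos_of_pos (by linarith)
    have hyα : (0:ℝ) < y + α := by linarith
    calc y * Real.Gamma y = Real.Gamma (y + 1) := (Real.Gamma_add_one hy.ne').symm
      _ ≤ Real.Gamma (y + α) ^ (α:ℝ) * ((y + α) * Real.Gamma (y + α)) ^ (1 - α : ℝ) := h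
      _ = Real.Gamma (y + α) * (y + α) ^ (1 - α : ℝ) := by
          rw [Real.mul_rpow hyα.le hGpos.le, ← mul_assoc,
            mul_comm (Real.Gamma (y+α) ^ (α:ℝ)), mul_assoc, ← Real.rpow_add hGpos]
          norm_num
          ring

open Filter in
private lemma summable_ml3 {α β γ x : ℝ} (hα0 : 0 < α) (hα1 : α ≤ 1) (hβ : 0 < β) (hγ : 0 < γ) :
    Summable (fun j : ℕ => Real.Gamma ((j:ℝ) + γ) * x ^ j / ((j.factorial : ℝ) * Real.Gamma ((j:ℝ) * α + β))) := by
  set f : ℕ → ℝ := fun j => Real.Gamma ((j:ℝ) + γ) * x ^ j / ((j.factorial : ℝ) * Real.Gamma ((j:ℝ) * α + β)) with hf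
  apply summable_of_ratio_norm_eventually_le (r := 1/2) (by norm_num)
  -- eventual bound
  have htend : Tendsto (fun j : ℕ => (j:ℝ) * α + β) atTop atTop :=
    tendsto_atTop_add_const_right _ β (tendsto_natCast_atTop_atTop.atTop_mul_const hα0)
  set C : ℝ := (4 * (γ + 1) * |x| + 1) ^ (1/α : ℝ) with hC
  filter_upwards [htend.eventually_ge_atTop 1, htend.eventually_ge_atTop C] with j hy1 hyC
  set y : ℝ := (j:ℝ) * α + β with hyd
  have hy0 : (0:ℝ) < y := by linarith
  have hGy : 0 < Real.Gamma y := Real.Gamma_pos_of_pos hy0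
  have hGyα : 0 < Real.Gamma (y + α) := Real.Gamma_pos_of_pos (by linarith)
  have hGjγ : 0 < Real.Gamma ((j:ℝ) + γ) := Real.Gamma_pos_of_pos (by positivity)
  have hfact : (0:ℝ) < (j.factorial : ℝ) := by exact_mod_cast j.factorial_pos
  -- exact ratio formula
  have hnorm : ∀ m : ℕ, ‖f m‖ = Real.Gamma ((m:ℝ) + γ) * |x| ^ m / ((m.factorial : ℝ) * Real.Gamma ((m:ℝ) * α + β)) := by
    intro m
    have h1 : 0 < Real.Gamma ((m:ℝ) + γ) := Real.Gamma_pos_of_pos (by positivity)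
    have h2 : (0:ℝ) < (m.factorial : ℝ) * Real.Gamma ((m:ℝ) * α + β) := by
      have := Real.Gamma_pos_of_pos (show (0:ℝ) < (m:ℝ)*α+β by positivity)
      have : (0:ℝ) < (m.factorial:ℝ) := by exact_mod_cast m.factorial_pos
      positivity
    rw [Real.norm_eq_abs, hf]
    rw [abs_div, abs_mul, abs_of_pos h1, abs_of_pos h2, abs_pow]
  rw [hnorm, hnorm]
  -- rewrite (j+1)-term
  have e1 : ((j+1:ℕ):ℝ) + γ = ((j:ℝ) + γ) + 1 := by push_cast; ring
  have e2 : ((j+1:ℕ):ℝ) * α + β = y + α := by push_cast; ring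
  have e3 : ((j+1).factorial : ℝ) = ((j:ℝ)+1) * (j.factorial : ℝ) := by
    rw [Nat.factorial_succ]; push_cast; ring
  rw [e1, e2, e3, Real.Gamma_add_one (by positivity)]
  -- now show the inequality
  have hgaut := gautschi hα0 hα1 hy0
  have hj1 : (0:ℝ) < (j:ℝ) + 1 := by positivity
  -- bound:  ((j+γ)/(j+1)) * |x| * (Γ y / Γ (y+α)) ≤ 1/2
  have hratio : Real.Gamma y / Real.Gamma (y + α) ≤ 2 / y ^ (α:ℝ) := by
    have h1 : Real.Gamma y / Real.Gamma (y + α) ≤ (y + α) ^ (1-α:ℝ) / y := by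
      rw [div_le_div_iff₀ hGyα hy0]
      linarith [hgaut]
    have h2 : (y + α) ^ (1-α:ℝ) ≤ (2*y) ^ (1-α:ℝ) := by
      apply Real.rpow_le_rpow (by linarith) (by linarith) (by linarith)
    have h3 : (2*y) ^ (1-α:ℝ) ≤ 2 * y ^ (1-α:ℝ) := by
      rw [Real.mul_rpow (by norm_num) hy0.le]
      have : (2:ℝ) ^ (1-α:ℝ) ≤ 2 ^ (1:ℝ) :=
        Real.rpow_le_rpow_of_exponent_le (by norm_num) (by linarith)
      rw [Real.rpow_one] at this
      nlinarith [Real.rpow_nonneg hy0.le (1-α:ℝ)]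
    have h4 : (2:ℝ) * y ^ (1-α:ℝ) / y = 2 / y ^ (α:ℝ) := by
      rw [div_eq_div_iff hy0.ne' (Real.rpow_pos_of_pos hy0 (α:ℝ)).ne']
      rw [mul_assoc, ← Real.rpow_add hy0, show (1:ℝ)-α+α = 1 by ring, Real.rpow_one]
    calc Real.Gamma y / Real.Gamma (y + α) ≤ (y + α) ^ (1-α:ℝ) / y := h1
      _ ≤ 2 * y ^ (1-α:ℝ) / y := by gcongr; linarith
      _ = 2 / y ^ (α:ℝ) := h4
  have hyalpha : 4 * (γ + 1) * |x| ≤ y ^ (α:ℝ) := by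
    have hC0 : (0:ℝ) ≤ 4 * (γ + 1) * |x| + 1 := by positivity
    have h := Real.rpow_le_rpow (Real.rpow_nonneg hC0 _) hyC hα0.le
    rw [← Real.rpow_mul hC0, one_div, inv_mul_cancel₀ hα0.ne', Real.rpow_one] at h
    linarith
  have hyα_pos : (0:ℝ) < y ^ (α:ℝ) := Real.rpow_pos_of_pos hy0 _
  -- assemble
  have heq : (↑j + γ) * Real.Gamma (↑j + γ) * |x| ^ (j + 1) / ((↑j + 1) * ↑j.factorial * Real.Gamma (y + α))
      = (((j:ℝ) + γ)/((j:ℝ)+1)) * |x| * (Real.Gamma y / Real.Gamma (y + α))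
        * (Real.Gamma ((j:ℝ) + γ) * |x| ^ j / ((j.factorial:ℝ) * Real.Gamma y)) := by
    rw [pow_succ]
    field_simp
  have hKnn : (0:ℝ) ≤ Real.Gamma ((j:ℝ) + γ) * |x| ^ j / ((j.factorial:ℝ) * Real.Gamma y) := by positivity
  have hfac : (((j:ℝ) + γ)/((j:ℝ)+1)) * |x| * (Real.Gamma y / Real.Gamma (y + α)) ≤ 1/2 := by
    have hA : ((j:ℝ) + γ)/((j:ℝ)+1) ≤ γ + 1 := by
      rw [div_le_iff₀ hj1]; nlinarith [Nat.cast_nonneg (α := ℝ) j]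
    have hA0 : (0:ℝ) ≤ ((j:ℝ) + γ)/((j:ℝ)+1) := by positivity
    have hB : Real.Gamma y / Real.Gamma (y + α) ≤ 2 / y ^ (α:ℝ) := hratio
    have hB0 : (0:ℝ) ≤ Real.Gamma y / Real.Gamma (y + α) := by positivity
    calc (((j:ℝ) + γ)/((j:ℝ)+1)) * |x| * (Real.Gamma y / Real.Gamma (y + α))
        ≤ (γ + 1) * |x| * (2 / y ^ (α:ℝ)) := by
          apply mul_le_mul (mul_le_mul hA le_rfl (abs_nonneg x) (by linarith)) hB hB0 (by positivity)
      _ = 2 * ((γ+1) * |x|) / y ^ (α:ℝ) := by ring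
      _ ≤ 1/2 := by
          rw [div_le_iff₀ hyα_pos]
          linarith [hyalpha]
  calc (↑j + γ) * Real.Gamma (↑j + γ) * |x| ^ (j + 1) / ((↑j + 1) * ↑j.factorial * Real.Gamma (y + α))
      = (((j:ℝ) + γ)/((j:ℝ)+1)) * |x| * (Real.Gamma y / Real.Gamma (y + α))
        * (Real.Gamma ((j:ℝ) + γ) * |x| ^ j / ((j.factorial:ℝ) * Real.Gamma y)) := heq
    _ ≤ 1/2 * (Real.Gamma ((j:ℝ) + γ) * |x| ^ j / ((j.factorial:ℝ) * Real.Gamma y)) :=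
        mul_le_mul_of_nonneg_right hfac hKnn

private lemma ml3_rec {α β x : ℝ} (hα0 : 0 < α) (hα1 : α ≤ 1) (hβ : 0 < β) (k : ℕ) :
    ml3 α β (k : ℝ) x = ml3 α β ((k:ℝ)+1) x - x * ml3 α (β+α) ((k:ℝ)+1) x := by
  set f : ℝ → ℝ → ℕ → ℝ := fun γ β' j =>
    Real.Gamma ((j:ℝ) + γ) * x ^ j / ((j.factorial : ℝ) * Real.Gamma ((j:ℝ) * α + β')) with hfdef
  have hk1 : (0:ℝ) < (k:ℝ)+1 := by positivity
  have hsum1 : Summable (f ((k:ℝ)+1) β) := summable_ml3 hα0 hα1 hβ hk1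
  have hsum2 : Summable (f ((k:ℝ)+1) (β+α)) := summable_ml3 hα0 hα1 (by linarith) hk1
  set F : ℕ → ℝ := fun j =>
    (j:ℝ) * Real.Gamma ((j:ℝ) + (k:ℝ)) * x ^ j / ((j.factorial : ℝ) * Real.Gamma ((j:ℝ) * α + β)) with hFdef
  have hF1 : ∀ j : ℕ, F (j+1) = x * f ((k:ℝ)+1) (β+α) j := by
    intro j
    simp only [hFdef, hfdef]
    rw [Nat.factorial_succ]
    push_cast
    rw [show (j:ℝ) + 1 + (k:ℝ) = ((j:ℝ) + ((k:ℝ)+1)) by ring,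
      show ((j:ℝ)+1) * α + β = (j:ℝ) * α + (β + α) by ring, pow_succ]
    have h1 : ((j.factorial:ℝ)) ≠ 0 := by positivity
    have h2 : Real.Gamma ((j:ℝ) * α + (β + α)) ≠ 0 :=
      (Real.Gamma_pos_of_pos (by positivity)).ne'
    field_simp
  have hFsum : Summable F := by
    rw [← summable_nat_add_iff 1]
    simpa [hF1] using hsum2.mul_left x
  have hF0 : F 0 = 0 := by simp [hFdef]
  have htsumF : ∑' j, F j = x * ∑' j, f ((k:ℝ)+1) (β+α) j := by
    rw [Summable.tsum_eq_zero_add hFsum, hF0, zero_add]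
    simp only [hF1]
    exact tsum_mul_left
  have hmain : ∑' j, f ((k:ℝ)+1) β j - x * ∑' j, f ((k:ℝ)+1) (β+α) j
      = ∑' j, (f ((k:ℝ)+1) β j - F j) := by
    rw [← htsumF, ← Summable.tsum_sub hsum1 hFsum]
  have hterm0 : ∀ m : ℕ, f ((k:ℝ)+1) β (m+1) - F (m+1) = (k:ℝ) * f (k:ℝ) β (m+1) := by
    intro m
    simp only [hfdef, hFdef]
    push_cast
    rw [show (m:ℝ) + 1 + ((k:ℝ)+1) = ((m:ℝ)+1+(k:ℝ)) + 1 by ring,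
      Real.Gamma_add_one (by positivity : ((m:ℝ)+1+(k:ℝ)) ≠ 0)]
    have h1 : (((m+1).factorial:ℝ)) ≠ 0 := by positivity
    have h2 : Real.Gamma (((m:ℝ)+1) * α + β) ≠ 0 := (Real.Gamma_pos_of_pos (by positivity)).ne'
    push_cast at h1
    field_simp
    ring
  rcases Nat.eq_zero_or_pos k with hk | hk
  · subst hk
    simp only [Nat.cast_zero, zero_add] at hmain ⊢
    simp only [ml3]
    rw [if_pos trivial, if_neg (one_ne_zero (α := ℝ)), if_neg (one_ne_zero (α := ℝ)), Real.Gamma_one]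
    simp only [one_div, inv_one, one_mul]
    simp only [hfdef] at hmain
    rw [hmain, tsum_eq_single 0 ?_]
    · norm_num [hFdef, Real.Gamma_one]
    · intro b hb
      obtain ⟨m, rfl⟩ := Nat.exists_eq_succ_of_ne_zero hb
      have h := hterm0 m
      simp only [hfdef, Nat.cast_zero, zero_add, zero_mul] at h
      exact h
  · have hkR : (0:ℝ) < (k:ℝ) := by exact_mod_cast hk
    have hterm : ∀ j : ℕ, f ((k:ℝ)+1) β j - F j = (k:ℝ) * f (k:ℝ) β j := by
      intro j
      cases j with
      | zero =>
        simp only [hfdef, hFdef]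
        norm_num
        rw [show (k:ℝ) + 1 = (k:ℝ) + 1 from rfl, Real.Gamma_add_one hkR.ne']
        ring
      | succ m => exact hterm0 m
    have hmain2 : ∑' j, f ((k:ℝ)+1) β j - x * ∑' j, f ((k:ℝ)+1) (β+α) j
        = (k:ℝ) * ∑' j, f (k:ℝ) β j := by
      rw [hmain, tsum_congr hterm, tsum_mul_left]
    simp only [ml3]
    rw [if_neg hkR.ne', if_neg hk1.ne', if_neg hk1.ne', Real.Gamma_add_one hkR.ne']
    have hGk : Real.Gamma (k:ℝ) ≠ 0 := (Real.Gamma_pos_of_pos hkR).ne'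
    simp only [hfdef] at hmain2
    field_simp
    simp only [show ∀ j : ℕ, α * (j:ℝ) = (j:ℝ) * α from fun j => mul_comm _ _]
    rw [hmain2]

theorem stmt6 (α l t : ℝ) (hα0 : 0 < α) (hα1 : α ≤ 1) (hl : 0 < l) (ht : 0 ≤ t) (n : ℕ) :
    l ^ (2 * n) * t ^ (2 * (n : ℝ) * α) * ml3 α (2 * (n : ℝ) * α + 1) (2 * (n : ℝ) + 1) (-(l * t ^ α))
      + l ^ (2 * n + 1) * t ^ ((2 * (n : ℝ) + 1) * α) * ml3 α ((2 * (n : ℝ) + 1) * α + 1) (2 * (n : ℝ) + 2) (-(l * t ^ α))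
    = l ^ (2 * n) * t ^ (2 * (n : ℝ) * α) * ml3 α (2 * (n : ℝ) * α + 1) (2 * (n : ℝ)) (-(l * t ^ α))
      - l ^ (2 * n + 2) * t ^ (2 * ((n : ℝ) + 1) * α) * ml3 α (2 * ((n : ℝ) + 1) * α + 1) (2 * (n : ℝ) + 2) (-(l * t ^ α)) := by
  have hk1 : (0:ℝ) < 2*(n:ℝ)*α+1 := by positivity
  have hk2 : (0:ℝ) < (2*(n:ℝ)+1)*α+1 := by positivity
  have R1 := ml3_rec (x := -(l * t ^ α)) hα0 hα1 hk1 (2*n)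
  have R2 := ml3_rec (x := -(l * t ^ α)) hα0 hα1 hk2 (2*n+1)
  push_cast at R1 R2
  rw [show 2*(n:ℝ)*α+1+α = (2*(n:ℝ)+1)*α+1 by ring] at R1
  rw [show (2*(n:ℝ)+1)*α+1+α = 2*((n:ℝ)+1)*α+1 by ring,
    show 2*(n:ℝ)+1+1 = 2*(n:ℝ)+2 by ring] at R2
  rw [show t ^ (2*(n:ℝ)*α) = (t^α)^(2*n) from by
        rw [show 2*(n:ℝ)*α = α*((2*n:ℕ):ℝ) by push_cast; ring, Real.rpow_mul ht, Real.rpow_natCast],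
      show t ^ ((2*(n:ℝ)+1)*α) = (t^α)^(2*n+1) from by
        rw [show (2*(n:ℝ)+1)*α = α*((2*n+1:ℕ):ℝ) by push_cast; ring, Real.rpow_mul ht, Real.rpow_natCast],
      show t ^ (2*((n:ℝ)+1)*α) = (t^α)^(2*n+2) from by
        rw [show 2*((n:ℝ)+1)*α = α*((2*n+2:ℕ):ℝ) by push_cast; ring, Real.rpow_mul ht, Real.rpow_natCast]]
  rw [R1, R2]
  ring
end

section
/- For λ>0, t≥0 and every integer r≥1, the r-th factorial moment of N̂(t) equals r! λ^{2r} t^{2r} E^r_{1,2r+1}(−2λt), i.e. Σ_{n=0}^∞ n(n−1)⋯(n−r+1) · ((λt)^{2n}/(2n)! + (λt)^{2n+1}/(2n+1)!) e^{−λt} = r! λ^{2r} t^{2r} E^r_{1,2r+1}(−2λt). -/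
open Finset

private lemma choose_le_two_pow' (n k : ℕ) : n.choose k ≤ 2 ^ n := by
  rcases le_or_gt k n with h | h
  · calc n.choose k ≤ ∑ m ∈ range (n+1), n.choose m :=
        Finset.single_le_sum (fun i _ => Nat.zero_le _) (mem_range.2 (by omega))
    _ = 2 ^ n := Nat.sum_range_choose n
  · simp [Nat.choose_eq_zero_of_lt h]

noncomputable def Aa (m r : ℕ) : ℝ :=
  ∑ j ∈ range (m+1), (-2:ℝ)^j * ((j + r - 1).choose j) * (m.choose (j + 2*r))

noncomputable def Bb (m r : ℕ) : ℝ :=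
  ∑ j ∈ range (m+1), (-2:ℝ)^j * ((j + r - 1).choose j) * (m.choose (j + 2*r - 1))

lemma Aa_zero (m : ℕ) : Aa m 0 = 1 := by
  unfold Aa
  rw [Finset.sum_eq_single 0]
  · simp
  · intro j _ hj
    rw [Nat.choose_eq_zero_of_lt (by omega : j + 0 - 1 < j)]
    simp
  · intro h; simp at h

lemma Aa_succ (m r : ℕ) (hr : 1 ≤ r) : Aa (m+1) r = Aa m r + Bb m r := by
  have step : ∀ j ∈ range (m+1),
      (-2:ℝ)^j * ((j + r - 1).choose j) * ((m+1).choose (j + 2*r))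
      = (-2:ℝ)^j * ((j + r - 1).choose j) * (m.choose (j + 2*r))
        + (-2:ℝ)^j * ((j + r - 1).choose j) * (m.choose (j + 2*r - 1)) := by
    intro j _
    obtain ⟨k, hk⟩ : ∃ k, j + 2*r - 1 = k := ⟨_, rfl⟩
    have hk2 : j + 2*r = k + 1 := by omega
    rw [hk, hk2, Nat.choose_succ_succ']
    push_cast; ring
  unfold Aa Bb
  rw [Finset.sum_range_succ, Nat.choose_eq_zero_of_lt (by omega : m + 1 < m + 1 + 2*r),
    Finset.sum_congr rfl step, Finset.sum_add_distrib]
  push_cast; ring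

lemma Bb_succ (m r : ℕ) (hr : 1 ≤ r) : Bb (m+1) r = Aa m (r-1) - Bb m r := by
  have hBm : Bb m r
      = ∑ j ∈ range m, (-2:ℝ)^j * ((j + r - 1).choose j) * (m.choose (j + 2*r - 1)) := by
    unfold Bb
    rw [Finset.sum_range_succ, Nat.choose_eq_zero_of_lt (by omega : m < m + 2*r - 1)]
    simp
  have hC : ∑ j ∈ range (m+1), (-2:ℝ)^j * ((j + r - 1).choose j) * (m.choose (j + 2*r - 2))
      = Aa m (r-1) - 2 * Bb m r := by
    have step : ∀ j ∈ range (m+1),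
        (-2:ℝ)^j * ((j + r - 1).choose j) * (m.choose (j + 2*r - 2))
        = (-2:ℝ)^j * ((j + (r-1) - 1).choose j) * (m.choose (j + 2*(r-1)))
          + (-2:ℝ)^j * (if j = 0 then (0:ℝ) else ((j + r - 2).choose (j-1) : ℝ))
              * (m.choose (j + 2*r - 2)) := by
      intro j _
      rcases Nat.eq_zero_or_pos j with h0 | h1
      · subst h0
        rw [if_pos rfl]
        rw [show 0 + 2*(r-1) = 0 + 2*r - 2 by omega]
        simp
      · obtain ⟨i, rfl⟩ : ∃ i, j = i + 1 := ⟨j-1, by omega⟩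
        rw [if_neg (by omega)]
        rw [show i + 1 + r - 1 = (i + r - 1) + 1 by omega,
            show i + 1 + (r-1) - 1 = i + r - 1 by omega,
            show i + 1 + 2*(r-1) = i + 1 + 2*r - 2 by omega,
            show i + 1 + r - 2 = i + r - 1 by omega,
            show i + 1 - 1 = i by omega,
            show (i + r - 1) + 1 = (i + r - 1) + 1 from rfl]
        rw [show ((i + r - 1) + 1).choose (i + 1)
              = (i + r - 1).choose i + (i + r - 1).choose (i+1) from Nat.choose_succ_succ' _ _]
        push_cast; ring
    rw [Finset.sum_congr rfl step, Finset.sum_add_distrib]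
    have h2 : ∑ j ∈ range (m+1),
        (-2:ℝ)^j * (if j = 0 then (0:ℝ) else ((j + r - 2).choose (j-1) : ℝ))
          * (m.choose (j + 2*r - 2)) = -2 * Bb m r := by
      rw [Finset.sum_range_succ', hBm, Finset.mul_sum, if_pos rfl, mul_zero, zero_mul,
        add_zero]
      refine Finset.sum_congr rfl (fun i _ => ?_)
      rw [if_neg (Nat.succ_ne_zero i), show i + 1 + r - 2 = i + r - 1 by omega,
          show i + 1 - 1 = i by omega, show i + 1 + 2*r - 2 = i + 2*r - 1 by omega]
      ring
    rw [h2]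
    unfold Aa
    ring
  unfold Bb
  rw [Finset.sum_range_succ, Nat.choose_eq_zero_of_lt (by omega : m + 1 < m + 1 + 2*r - 1)]
  have step2 : ∀ j ∈ range (m+1),
      (-2:ℝ)^j * ((j + r - 1).choose j) * ((m+1).choose (j + 2*r - 1))
      = (-2:ℝ)^j * ((j + r - 1).choose j) * (m.choose (j + 2*r - 2))
        + (-2:ℝ)^j * ((j + r - 1).choose j) * (m.choose (j + 2*r - 1)) := by
    intro j _
    obtain ⟨k, hk⟩ : ∃ k, j + 2*r - 2 = k := ⟨_, rfl⟩
    have hk2 : j + 2*r - 1 = k + 1 := by omega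
    rw [hk, hk2, Nat.choose_succ_succ']
    push_cast; ring
  rw [Finset.sum_congr rfl step2, Finset.sum_add_distrib, hC,
    show (∑ j ∈ range (m+1), (-2:ℝ)^j * ((j + r - 1).choose j) * (m.choose (j + 2*r - 1)))
      = Bb m r from rfl]
  push_cast; ring

lemma AB_eq (m : ℕ) : (∀ r, Aa m r = (((m/2).choose r : ℕ) : ℝ)) ∧
    (∀ r, 1 ≤ r → Bb m r = ((m % 2 : ℕ) : ℝ) * (((m/2).choose (r-1) : ℕ) : ℝ)) := by
  induction m with
  | zero =>
    constructor
    · intro r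
      unfold Aa
      rw [Finset.sum_range_one]
      rcases Nat.eq_zero_or_pos r with rfl | hr
      · simp
      · rw [Nat.choose_eq_zero_of_lt (by omega : 0 < 0 + 2*r),
            Nat.choose_eq_zero_of_lt (by omega : 0/2 < r)]
        simp
    · intro r hr
      unfold Bb
      rw [Finset.sum_range_one, Nat.choose_eq_zero_of_lt (by omega : 0 < 0 + 2*r - 1)]
      norm_num
  | succ m ih =>
    obtain ⟨ihA, ihB⟩ := ih
    constructor
    · intro r
      rcases Nat.eq_zero_or_pos r with rfl | hr
      · rw [Aa_zero]; simp
      · rw [Aa_succ m r hr, ihA r, ihB r hr]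
        rcases Nat.mod_two_eq_zero_or_one m with h | h
        · rw [h, show (m+1)/2 = m/2 by omega]
          simp
        · rw [h, show (m+1)/2 = m/2 + 1 by omega]
          rw [show r = (r-1) + 1 by omega, Nat.choose_succ_succ']
          rw [show r - 1 + 1 - 1 = r - 1 by omega]
          push_cast; ring
    · intro r hr
      rw [Bb_succ m r hr, ihA (r-1), ihB r hr]
      rcases Nat.mod_two_eq_zero_or_one m with h | h
      · rw [h, show (m+1) % 2 = 1 by omega, show (m+1)/2 = m/2 by omega]
        push_cast; ring
      · rw [h, show (m+1) % 2 = 0 by omega]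
        push_cast; ring

lemma key (m r : ℕ) :
    ∑ a ∈ range (m+1),
      (if 2*r ≤ a then ((r.factorial : ℝ) * (((a - 2*r) + r - 1).choose (a - 2*r))
          * (-2:ℝ)^(a - 2*r)) else 0) * (m.choose a)
    = ((m/2).descFactorial r : ℝ) := by
  rcases lt_or_ge m (2*r) with hm | hm
  · rw [Finset.sum_eq_zero, Nat.descFactorial_eq_zero_iff_lt.2 (by omega : m/2 < r)]
    · simp
    · intro a ha
      rw [if_neg (by have := Finset.mem_range.1 ha; omega)]
      simp
  · rw [Finset.range_eq_Ico, ← Finset.sum_Ico_consecutive _ (Nat.zero_le (2*r))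
      (by omega : 2*r ≤ m+1)]
    rw [Finset.sum_eq_zero (fun a ha => by
      rw [if_neg (by have := (Finset.mem_Ico.1 ha).2; omega)]; simp), zero_add]
    rw [Finset.sum_Ico_eq_sum_range]
    have h1 : ∀ i ∈ range (m + 1 - 2*r),
        (if 2*r ≤ 2*r + i then ((r.factorial : ℝ) * (((2*r + i - 2*r) + r - 1).choose (2*r + i - 2*r))
            * (-2:ℝ)^(2*r + i - 2*r)) else 0) * (m.choose (2*r + i))
        = (r.factorial : ℝ) * ((-2:ℝ)^i * ((i + r - 1).choose i) * (m.choose (i + 2*r))) := by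
      intro i _
      rw [if_pos (by omega), show 2*r + i - 2*r = i by omega, show 2*r + i = i + 2*r by omega]
      ring
    rw [Finset.sum_congr rfl h1, ← Finset.mul_sum]
    have h2 : ∑ i ∈ range (m + 1 - 2*r), (-2:ℝ)^i * ((i + r - 1).choose i) * (m.choose (i + 2*r))
        = Aa m r := by
      unfold Aa
      refine Finset.sum_subset (Finset.range_subset_range.2 (by omega)) ?_
      intro i _ hi
      rw [Nat.choose_eq_zero_of_lt (by simp at hi; omega : m < i + 2*r)]
      simp
    rw [h2, (AB_eq m).1 r, Nat.descFactorial_eq_factorial_mul_choose]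
    push_cast; ring

theorem stmt8 (l t : ℝ) (hl : 0 < l) (ht : 0 ≤ t) (r : ℕ) (hr : 1 ≤ r) :
    ∑' n : ℕ, (n.descFactorial r : ℝ) * (((l * t) ^ (2 * n) / ((2 * n).factorial : ℝ)
          + (l * t) ^ (2 * n + 1) / ((2 * n + 1).factorial : ℝ)) * Real.exp (-(l * t)))
      = (r.factorial : ℝ) * l ^ (2 * r) * t ^ (2 * r) * ml3 1 (2 * (r : ℝ) + 1) (r : ℝ) (-(2 * l * t)) := by
  have hx : 0 ≤ l * t := mul_nonneg hl.le ht
  set x : ℝ := l * t with hxdef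
  set dd : ℕ → ℝ := fun a =>
    if 2*r ≤ a then ((r.factorial : ℝ) * (((a - 2*r) + r - 1).choose (a - 2*r) : ℝ)
      * (-2:ℝ)^(a - 2*r)) else 0 with hdd
  set f : ℕ → ℝ := fun a => dd a * x ^ a / a.factorial with hfdef
  set g : ℕ → ℝ := fun b => x ^ b / b.factorial with hgdef
  set F : ℕ → ℝ := fun m => ((m/2).descFactorial r : ℝ) * x ^ m / m.factorial with hFdef
  clear_value x dd f g F
  have hgn : Summable fun b => ‖g b‖ := by
    have he : (fun b => ‖g b‖) = fun b => x ^ b / b.factorial := by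
      funext b
      simp only [hgdef]
      exact Real.norm_of_nonneg (by positivity)
    rw [he]
    exact Real.summable_pow_div_factorial x
  have hfn : Summable fun a => ‖f a‖ := by
    refine Summable.of_nonneg_of_le (fun a => norm_nonneg _)
      (fun a => ?_) ((Real.summable_pow_div_factorial (4*x)).mul_left (r.factorial : ℝ))
    rcases le_or_gt (2*r) a with h2 | h2
    · have hcb : (((a - 2*r) + r - 1).choose (a - 2*r)) * 2^(a - 2*r) ≤ 4^a := by
        calc (((a - 2*r) + r - 1).choose (a - 2*r)) * 2^(a - 2*r)
            ≤ 2^((a - 2*r) + r - 1) * 2^(a - 2*r) :=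
              Nat.mul_le_mul_right _ (choose_le_two_pow' _ _)
          _ ≤ 2^a * 2^a := Nat.mul_le_mul (Nat.pow_le_pow_right (by norm_num) (by omega))
              (Nat.pow_le_pow_right (by norm_num) (by omega))
          _ = 4^a := by rw [← Nat.mul_pow]
      have habs : ‖f a‖ = (r.factorial : ℝ) * ((((a - 2*r) + r - 1).choose (a - 2*r) : ℕ) : ℝ)
          * 2^(a - 2*r) * x^a / a.factorial := by
        simp only [hfdef, hdd, if_pos h2, Real.norm_eq_abs, abs_div, abs_mul, abs_pow]
        rw [abs_of_nonneg hx, abs_of_nonneg (by positivity : (0:ℝ) ≤ (r.factorial:ℝ)),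
          abs_of_nonneg (by positivity : (0:ℝ) ≤ ((((a - 2*r) + r - 1).choose (a - 2*r) : ℕ) : ℝ)),
          abs_of_nonneg (by positivity : (0:ℝ) ≤ (a.factorial:ℝ))]
        norm_num
      rw [habs]
      have hcb' : ((((a - 2*r) + r - 1).choose (a - 2*r) : ℕ) : ℝ) * 2^(a - 2*r) ≤ 4^a := by
        exact_mod_cast hcb
      have hpos : (0:ℝ) ≤ (r.factorial : ℝ) * x^a / a.factorial := by positivity
      calc (r.factorial : ℝ) * ((((a - 2*r) + r - 1).choose (a - 2*r) : ℕ) : ℝ)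
            * 2^(a - 2*r) * x^a / a.factorial
          = ((r.factorial : ℝ) * x^a / a.factorial)
            * (((((a - 2*r) + r - 1).choose (a - 2*r) : ℕ) : ℝ) * 2^(a - 2*r)) := by ring
        _ ≤ ((r.factorial : ℝ) * x^a / a.factorial) * 4^a :=
            mul_le_mul_of_nonneg_left hcb' hpos
        _ = (r.factorial : ℝ) * ((4*x)^a / a.factorial) := by rw [mul_pow]; ring
    · simp only [hfdef, hdd, if_neg (not_le.2 h2)]
      simp only [zero_mul, zero_div, norm_zero]
      positivity
  have hinner : ∀ m : ℕ, ∑ kl ∈ Finset.HasAntidiagonal.antidiagonal m, f kl.1 * g kl.2 = F m := by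
    intro m
    rw [Finset.Nat.sum_antidiagonal_eq_sum_range_succ_mk]
    have hterm : ∀ a ∈ range (m+1), f a * g (m - a)
        = dd a * (m.choose a : ℝ) * (x ^ m / m.factorial) := by
      intro a ha
      have ham : a ≤ m := by have := Finset.mem_range.1 ha; omega
      have hxm : x ^ a * x ^ (m - a) = x ^ m := by rw [← pow_add]; congr 1; omega
      have h1 : ((m.choose a : ℕ) : ℝ) * a.factorial * (m-a).factorial = m.factorial := by
        exact_mod_cast Nat.choose_mul_factorial_mul_factorial ham
      simp only [hfdef, hgdef]
      have ha0 : (a.factorial : ℝ) ≠ 0 := by positivity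
      have hb0 : ((m-a).factorial : ℝ) ≠ 0 := by positivity
      have hm0 : (m.factorial : ℝ) ≠ 0 := by positivity
      field_simp
      linear_combination (dd a * (m.factorial:ℝ)) * hxm - dd a * x ^ m * h1
    rw [Finset.sum_congr rfl hterm, ← Finset.sum_mul]
    rw [show (∑ a ∈ range (m+1), dd a * (m.choose a : ℝ)) = ((m/2).descFactorial r : ℝ) from
      by simp only [hdd]; exact key m r]
    simp only [hFdef]
    ring
  have hFs : Summable F :=
    (summable_sum_mul_antidiagonal_of_summable_mul
      (summable_mul_of_summable_norm hfn hgn)).congr hinner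
  have hge : ∑' b, g b = Real.exp x := by
    rw [Real.exp_eq_exp_ℝ, NormedSpace.exp_eq_tsum_div]
    simp only [hgdef]
  have hFt : ∑' m, F m = (∑' a, f a) * Real.exp x := by
    rw [← tsum_congr hinner,
      ← tsum_mul_tsum_eq_tsum_sum_antidiagonal_of_summable_norm hfn hgn, hge]
  set H : ℕ → ℝ := fun m => F m * Real.exp (-x) with hHdef
  have hHs : Summable H := hFs.mul_right _
  have hHe : Summable fun n => H (2*n) := hHs.comp_injective (fun a b h => by omega)
  have hHo : Summable fun n => H (2*n+1) := hHs.comp_injective (fun a b h => by omega)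
  have hterm2 : ∀ n : ℕ, (n.descFactorial r : ℝ) * ((x ^ (2*n) / ((2*n).factorial : ℝ)
      + x ^ (2*n+1) / ((2*n+1).factorial : ℝ)) * Real.exp (-x)) = H (2*n) + H (2*n+1) := by
    intro n
    simp only [hHdef, hFdef]
    rw [show 2*n/2 = n by omega, show (2*n+1)/2 = n by omega]
    ring
  rw [tsum_congr hterm2, Summable.tsum_add hHe hHo, tsum_even_add_odd hHe hHo]
  have hHt : ∑' m, H m = ∑' a, f a := by
    simp only [hHdef]
    rw [tsum_mul_right, hFt, mul_assoc, ← Real.exp_add]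
    simp
  rw [hHt]
  -- now compute ∑' f and the RHS
  have hshift : ∑' a, f a = ∑' j, f (j + 2*r) := by
    refine (Function.Injective.tsum_eq (g := fun j => j + 2*r) (add_left_injective (2*r)) ?_).symm
    intro a ha
    simp only [Function.mem_support, hfdef, hdd] at ha
    rcases le_or_gt (2*r) a with h | h
    · exact ⟨a - 2*r, show a - 2*r + 2*r = a by omega⟩
    · rw [if_neg (not_le.2 h)] at ha
      simp at ha
  have hfj : ∀ j : ℕ, f (j + 2*r) = ((r.factorial : ℝ) * x^(2*r) / ((r-1).factorial : ℝ)) *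
      (((j + (r-1)).factorial : ℝ) * (-(2*x))^j
        / ((j.factorial : ℝ) * ((j + 2*r).factorial : ℝ))) := by
    intro j
    simp only [hfdef, hdd, if_pos (by omega : 2*r ≤ j + 2*r)]
    rw [show j + 2*r - 2*r = j by omega]
    have hch : ((j + r - 1).choose j : ℝ) * (j.factorial : ℝ) * ((r-1).factorial : ℝ)
        = ((j + (r-1)).factorial : ℝ) := by
      have h := Nat.choose_mul_factorial_mul_factorial (show j ≤ j + r - 1 by omega)
      rw [show j + r - 1 - j = r - 1 by omega] at h
      rw [show j + (r-1) = j + r - 1 by omega]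
      exact_mod_cast h
    have hx2 : x ^ (j + 2*r) = x^j * x^(2*r) := pow_add x j (2*r)
    have hneg : (-(2*x))^j = (-2:ℝ)^j * x^j := by rw [← neg_mul, mul_pow]
    rw [hx2, hneg, ← hch]
    have h1 : ((j+2*r).factorial : ℝ) ≠ 0 := by positivity
    have h2 : (j.factorial : ℝ) ≠ 0 := by positivity
    have h3 : ((r-1).factorial : ℝ) ≠ 0 := by positivity
    field_simp
  rw [hshift, tsum_congr hfj, tsum_mul_left]
  -- unfold ml3
  have hr0 : (r:ℝ) ≠ 0 := Nat.cast_ne_zero.mpr (by omega)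
  rw [ml3, if_neg hr0]
  have hGamma : ∀ j : ℕ, Real.Gamma ((j:ℝ) + r) * (-(2*l*t))^j
      / ((j.factorial : ℝ) * Real.Gamma ((j:ℝ)*1 + (2*(r:ℝ)+1)))
      = ((j + (r-1)).factorial : ℝ) * (-(2*x))^j
        / ((j.factorial : ℝ) * ((j + 2*r).factorial : ℝ)) := by
    intro j
    have e1 : (j:ℝ) + r = ((j + (r-1) : ℕ) : ℝ) + 1 := by
      push_cast [Nat.cast_sub hr]
      ring
    have e2 : (j:ℝ)*1 + (2*(r:ℝ)+1) = ((j + 2*r : ℕ) : ℝ) + 1 := by push_cast; ring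
    rw [e1, e2, Real.Gamma_nat_eq_factorial, Real.Gamma_nat_eq_factorial]
    rw [show -(2*l*t) = -(2*x) from by rw [hxdef]; ring]
  rw [tsum_congr hGamma]
  have eG : Real.Gamma (r:ℝ) = ((r-1).factorial : ℝ) := by
    rw [show (r:ℝ) = ((r-1 : ℕ) : ℝ) + 1 from by push_cast [Nat.cast_sub hr]; ring,
      Real.Gamma_nat_eq_factorial]
  rw [eG]
  rw [show x^(2*r) = l^(2*r) * t^(2*r) from by rw [hxdef, mul_pow]]
  ring
end

section
/- For a fixed t>0, the random variable N̂(t)/E(N̂(t)) converges in probability to 1 as λ → ∞, where N̂(t) has pmf p̂(n,t) = ((λt)^{2n}/(2n)! + (λt)^{2n+1}/(2n+1)!) e^{−λt} and mean m(λ) = (2λt − 1 + e^{−2λt})/4. Equivalently, lim_{λ→∞} Σ_{n=0}^∞ |n/m(λ) − 1| p̂(n,t) = 0. -/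
open Filter Real

lemma t0 (x : ℝ) : ∑' k : ℕ, x ^ k / (k.factorial : ℝ) = Real.exp x := by
  rw [Real.exp_eq_exp_ℝ, NormedSpace.exp_eq_tsum_div]

lemma summ1 (x : ℝ) : Summable (fun k : ℕ => (k : ℝ) * x ^ k / k.factorial) := by
  rw [← summable_nat_add_iff 1]
  have h : (fun k : ℕ => ((k + 1 : ℕ) : ℝ) * x ^ (k + 1) / (k + 1).factorial)
      = fun k : ℕ => x * (x ^ k / k.factorial) := by
    funext k
    have hk : ((k.factorial : ℝ)) ≠ 0 := Nat.cast_ne_zero.mpr k.factorial_ne_zero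
    have hk1 : ((k : ℝ) + 1) ≠ 0 := by positivity
    rw [Nat.factorial_succ]
    push_cast
    field_simp
    ring
  exact h ▸ (Real.summable_pow_div_factorial x).mul_left x

lemma summ2 (x : ℝ) : Summable (fun k : ℕ => (k : ℝ) ^ 2 * x ^ k / k.factorial) := by
  rw [← summable_nat_add_iff 1]
  have h : (fun k : ℕ => ((k + 1 : ℕ) : ℝ) ^ 2 * x ^ (k + 1) / (k + 1).factorial)
      = fun k : ℕ => x * ((k : ℝ) * x ^ k / k.factorial) + x * (x ^ k / k.factorial) := by
    funext k
    have hk : ((k.factorial : ℝ)) ≠ 0 := Nat.cast_ne_zero.mpr k.factorial_ne_zero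
    have hk1 : ((k : ℝ) + 1) ≠ 0 := by positivity
    rw [Nat.factorial_succ]
    push_cast
    field_simp
    ring
  exact h ▸ (((summ1 x).mul_left x).add ((Real.summable_pow_div_factorial x).mul_left x))

lemma t1 (x : ℝ) : ∑' k : ℕ, (k : ℝ) * x ^ k / k.factorial = x * Real.exp x := by
  rw [Summable.tsum_eq_zero_add (summ1 x)]
  have h : (fun k : ℕ => ((k + 1 : ℕ) : ℝ) * x ^ (k + 1) / (k + 1).factorial)
      = fun k : ℕ => x * (x ^ k / k.factorial) := by
    funext k
    have hk : ((k.factorial : ℝ)) ≠ 0 := Nat.cast_ne_zero.mpr k.factorial_ne_zero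
    have hk1 : ((k : ℝ) + 1) ≠ 0 := by positivity
    rw [Nat.factorial_succ]
    push_cast
    field_simp
    ring
  push_cast
  simp only [pow_zero, Nat.cast_zero]
  rw [show (∑' (k : ℕ), ((k:ℝ) + 1) * x ^ (k + 1) / ((k+1).factorial : ℝ))
      = ∑' (k : ℕ), x * (x ^ k / k.factorial) by
    refine tsum_congr fun k => ?_
    have := congrFun h k
    push_cast at this
    exact this]
  rw [tsum_mul_left, t0]
  ring

lemma t2 (x : ℝ) : ∑' k : ℕ, (k : ℝ) ^ 2 * x ^ k / k.factorial = (x ^ 2 + x) * Real.exp x := by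
  rw [Summable.tsum_eq_zero_add (summ2 x)]
  have h : ∀ k : ℕ, ((k + 1 : ℕ) : ℝ) ^ 2 * x ^ (k + 1) / ((k + 1).factorial : ℝ)
      = x * ((k : ℝ) * x ^ k / k.factorial) + x * (x ^ k / k.factorial) := by
    intro k
    have hk : ((k.factorial : ℝ)) ≠ 0 := Nat.cast_ne_zero.mpr k.factorial_ne_zero
    have hk1 : ((k : ℝ) + 1) ≠ 0 := by positivity
    rw [Nat.factorial_succ]
    push_cast
    field_simp
    ring
  push_cast
  simp only [pow_zero, Nat.cast_zero]
  rw [show (∑' (k : ℕ), ((k:ℝ) + 1) ^ 2 * x ^ (k + 1) / ((k+1).factorial : ℝ))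
      = ∑' (k : ℕ), (x * ((k : ℝ) * x ^ k / k.factorial) + x * (x ^ k / k.factorial)) by
    refine tsum_congr fun k => ?_
    have := h k
    push_cast at this
    exact this]
  rw [Summable.tsum_add ((summ1 x).mul_left x) ((Real.summable_pow_div_factorial x).mul_left x),
    tsum_mul_left, tsum_mul_left, t0, t1]
  ring

lemma summvar (x : ℝ) : Summable (fun k : ℕ => ((k : ℝ) - x) ^ 2 * (x ^ k / k.factorial)) := by
  have h : (fun k : ℕ => ((k : ℝ) - x) ^ 2 * (x ^ k / k.factorial))
      = fun k : ℕ => ((k : ℝ) ^ 2 * x ^ k / k.factorial + x ^ 2 * (x ^ k / k.factorial))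
          - 2 * x * ((k : ℝ) * x ^ k / k.factorial) := by
    funext k; ring
  exact h ▸ (((summ2 x).add ((Real.summable_pow_div_factorial x).mul_left (x ^ 2))).sub
    ((summ1 x).mul_left (2 * x)))

lemma tvar (x : ℝ) : ∑' k : ℕ, ((k : ℝ) - x) ^ 2 * (x ^ k / k.factorial) = x * Real.exp x := by
  have h : (fun k : ℕ => ((k : ℝ) - x) ^ 2 * (x ^ k / k.factorial))
      = fun k : ℕ => ((k : ℝ) ^ 2 * x ^ k / k.factorial + x ^ 2 * (x ^ k / k.factorial))
          - 2 * x * ((k : ℝ) * x ^ k / k.factorial) := by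
    funext k; ring
  rw [h, Summable.tsum_sub (((summ2 x).add ((Real.summable_pow_div_factorial x).mul_left (x ^ 2))))
      ((summ1 x).mul_left (2 * x)),
    Summable.tsum_add (summ2 x) ((Real.summable_pow_div_factorial x).mul_left (x ^ 2)),
    tsum_mul_left, tsum_mul_left, t0, t1, t2]
  ring

lemma summabs (x : ℝ) (hx : 0 < x) :
    Summable (fun k : ℕ => |(k : ℝ) - x| * (x ^ k / k.factorial)) := by
  refine Summable.of_nonneg_of_le (fun k => ?_) (fun k => ?_)
    (((summ1 x).add ((Real.summable_pow_div_factorial x).mul_left x)))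
  · have : (0:ℝ) ≤ x ^ k / k.factorial := by positivity
    exact mul_nonneg (abs_nonneg _) this
  · have hq : (0:ℝ) ≤ x ^ k / k.factorial := by positivity
    have habs : |(k : ℝ) - x| ≤ (k : ℝ) + x := by
      refine (abs_sub _ _).trans ?_
      rw [abs_of_nonneg (Nat.cast_nonneg k), abs_of_pos hx]
    calc |(k : ℝ) - x| * (x ^ k / k.factorial) ≤ ((k : ℝ) + x) * (x ^ k / k.factorial) :=
          mul_le_mul_of_nonneg_right habs hq
      _ = (k : ℝ) * x ^ k / k.factorial + x * (x ^ k / k.factorial) := by ring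

lemma sumabs_le (x : ℝ) (hx : 0 < x) :
    ∑' k : ℕ, |(k : ℝ) - x| * (x ^ k / k.factorial) ≤ Real.sqrt x * Real.exp x := by
  set c := Real.sqrt x with hc
  have hc0 : 0 < c := Real.sqrt_pos.mpr hx
  have hcc : c * c = x := Real.mul_self_sqrt hx.le
  have hpt : ∀ k : ℕ, |(k : ℝ) - x| * (x ^ k / k.factorial)
      ≤ (2 * c)⁻¹ * (((k : ℝ) - x) ^ 2 * (x ^ k / k.factorial)) + (c / 2) * (x ^ k / k.factorial) := by
    intro k
    have hq : (0:ℝ) ≤ x ^ k / k.factorial := by positivity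
    have h1 : |(k : ℝ) - x| ≤ (2 * c)⁻¹ * ((k : ℝ) - x) ^ 2 + c / 2 := by
      have h2 : (0:ℝ) < 2 * c := by positivity
      rw [← mul_le_mul_iff_right₀ h2]
      have h3 : 2 * c * ((2 * c)⁻¹ * ((k : ℝ) - x) ^ 2 + c / 2) = ((k : ℝ) - x) ^ 2 + c * c := by
        field_simp
      rw [h3]
      nlinarith [sq_nonneg (|(k : ℝ) - x| - c), sq_abs ((k : ℝ) - x), abs_nonneg ((k : ℝ) - x)]
    calc |(k : ℝ) - x| * (x ^ k / k.factorial)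
        ≤ ((2 * c)⁻¹ * ((k : ℝ) - x) ^ 2 + c / 2) * (x ^ k / k.factorial) :=
          mul_le_mul_of_nonneg_right h1 hq
      _ = (2 * c)⁻¹ * (((k : ℝ) - x) ^ 2 * (x ^ k / k.factorial)) + (c / 2) * (x ^ k / k.factorial) := by
          ring
  have hsum : Summable (fun k : ℕ => (2 * c)⁻¹ * (((k : ℝ) - x) ^ 2 * (x ^ k / k.factorial))
      + (c / 2) * (x ^ k / k.factorial)) :=
    ((summvar x).mul_left _).add ((Real.summable_pow_div_factorial x).mul_left _)
  calc ∑' k : ℕ, |(k : ℝ) - x| * (x ^ k / k.factorial)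
      ≤ ∑' k : ℕ, ((2 * c)⁻¹ * (((k : ℝ) - x) ^ 2 * (x ^ k / k.factorial))
          + (c / 2) * (x ^ k / k.factorial)) := Summable.tsum_le_tsum hpt (summabs x hx) hsum
    _ = (2 * c)⁻¹ * (x * Real.exp x) + (c / 2) * Real.exp x := by
        rw [Summable.tsum_add ((summvar x).mul_left _) ((Real.summable_pow_div_factorial x).mul_left _),
          tsum_mul_left, tsum_mul_left, tvar, t0]
    _ = c * Real.exp x := by
        rw [← hcc]
        field_simp
        ring

lemma key_s11 (x : ℝ) (hx : 1 ≤ x) :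
    ∑' n : ℕ, |(n : ℝ) / ((2 * x - 1 + Real.exp (-(2 * x))) / 4) - 1| *
        ((x ^ (2 * n) / ((2 * n).factorial : ℝ) + x ^ (2 * n + 1) / ((2 * n + 1).factorial : ℝ))
          * Real.exp (-x))
      ≤ 2 / Real.sqrt x + 3 / x := by
  have hx0 : (0:ℝ) < x := by linarith
  set m := (2 * x - 1 + Real.exp (-(2 * x))) / 4 with hmdef
  have hexp1 : Real.exp (-(2 * x)) ≤ 1 := by
    have : Real.exp (-(2 * x)) ≤ Real.exp 0 := Real.exp_le_exp.mpr (by linarith)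
    simpa using this
  have hexp0 : 0 < Real.exp (-(2 * x)) := Real.exp_pos _
  have hm_lb : x / 2 - 1 / 4 ≤ m := by rw [hmdef]; linarith
  have hm_ub : m ≤ x / 2 := by rw [hmdef]; linarith
  have hm_pos : 0 < m := by linarith
  have hm_x4 : x / 4 ≤ m := by linarith
  set F : ℕ → ℝ := fun k =>
    ((|(k : ℝ) - x| + 3 / 2) / (2 * m)) * (x ^ k / k.factorial * Real.exp (-x)) with hF
  have hFeq : F = fun k : ℕ => (Real.exp (-x) / (2 * m)) * (|(k : ℝ) - x| * (x ^ k / k.factorial))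
      + (3 / 2 * Real.exp (-x) / (2 * m)) * (x ^ k / k.factorial) := by
    funext k; simp only [hF]; ring
  have hFsumm : Summable F := by
    rw [hFeq]
    exact ((summabs x hx0).mul_left _).add ((Real.summable_pow_div_factorial x).mul_left _)
  have he : Summable (fun n : ℕ => F (2 * n)) :=
    hFsumm.comp_injective (fun a b h => by omega)
  have ho : Summable (fun n : ℕ => F (2 * n + 1)) :=
    hFsumm.comp_injective (fun a b h => by omega)
  have hpt : ∀ n : ℕ, |(n : ℝ) / m - 1| *
      ((x ^ (2 * n) / ((2 * n).factorial : ℝ) + x ^ (2 * n + 1) / ((2 * n + 1).factorial : ℝ))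
        * Real.exp (-x)) ≤ F (2 * n) + F (2 * n + 1) := by
    intro n
    have hq1 : (0:ℝ) ≤ x ^ (2 * n) / ((2 * n).factorial : ℝ) * Real.exp (-x) := by positivity
    have hq2 : (0:ℝ) ≤ x ^ (2 * n + 1) / ((2 * n + 1).factorial : ℝ) * Real.exp (-x) := by
      positivity
    have hnm : |(n : ℝ) / m - 1| = |(n : ℝ) - m| / m := by
      rw [show (n : ℝ) / m - 1 = ((n : ℝ) - m) / m by field_simp, abs_div, abs_of_pos hm_pos]
    have ha1 : |(n : ℝ) - m| ≤ (|((2 * n : ℕ) : ℝ) - x| + 3 / 2) / 2 := by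
      have h1 := le_abs_self (((2 * n : ℕ) : ℝ) - x)
      have h2 := neg_abs_le (((2 * n : ℕ) : ℝ) - x)
      rw [abs_le]
      push_cast at h1 h2 ⊢
      constructor <;> linarith
    have ha2 : |(n : ℝ) - m| ≤ (|((2 * n + 1 : ℕ) : ℝ) - x| + 3 / 2) / 2 := by
      have h1 := le_abs_self (((2 * n + 1 : ℕ) : ℝ) - x)
      have h2 := neg_abs_le (((2 * n + 1 : ℕ) : ℝ) - x)
      rw [abs_le]
      push_cast at h1 h2 ⊢
      constructor <;> linarith
    have hd1 : |(n : ℝ) / m - 1| ≤ (|((2 * n : ℕ) : ℝ) - x| + 3 / 2) / (2 * m) := by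
      rw [hnm, ← div_div]
      exact (div_le_div_iff_of_pos_right hm_pos).mpr ha1
    have hd2 : |(n : ℝ) / m - 1| ≤ (|((2 * n + 1 : ℕ) : ℝ) - x| + 3 / 2) / (2 * m) := by
      rw [hnm, ← div_div]
      exact (div_le_div_iff_of_pos_right hm_pos).mpr ha2
    have e1 := mul_le_mul_of_nonneg_right hd1 hq1
    have e2 := mul_le_mul_of_nonneg_right hd2 hq2
    simp only [hF]
    push_cast at e1 e2 ⊢
    nlinarith [e1, e2]
  have hS : Summable (fun n : ℕ => |(n : ℝ) / m - 1| *
      ((x ^ (2 * n) / ((2 * n).factorial : ℝ) + x ^ (2 * n + 1) / ((2 * n + 1).factorial : ℝ))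
        * Real.exp (-x))) := by
    refine Summable.of_nonneg_of_le (fun n => ?_) hpt (he.add ho)
    have h1 : (0:ℝ) ≤ x ^ (2 * n) / ((2 * n).factorial : ℝ) := by positivity
    have h2 : (0:ℝ) ≤ x ^ (2 * n + 1) / ((2 * n + 1).factorial : ℝ) := by positivity
    have h3 : (0:ℝ) ≤ Real.exp (-x) := (Real.exp_pos _).le
    exact mul_nonneg (abs_nonneg _) (mul_nonneg (by linarith) h3)
  set c := Real.sqrt x with hc
  have hc0 : 0 < c := Real.sqrt_pos.mpr hx0
  have hcc : c * c = x := Real.mul_self_sqrt hx0.le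
  calc ∑' n : ℕ, |(n : ℝ) / m - 1| *
        ((x ^ (2 * n) / ((2 * n).factorial : ℝ) + x ^ (2 * n + 1) / ((2 * n + 1).factorial : ℝ))
          * Real.exp (-x))
      ≤ ∑' n : ℕ, (F (2 * n) + F (2 * n + 1)) := Summable.tsum_le_tsum hpt hS (he.add ho)
    _ = (∑' n : ℕ, F (2 * n)) + ∑' n : ℕ, F (2 * n + 1) := Summable.tsum_add he ho
    _ = ∑' k : ℕ, F k := tsum_even_add_odd he ho
    _ = (Real.exp (-x) / (2 * m)) * (∑' k : ℕ, |(k : ℝ) - x| * (x ^ k / k.factorial))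
        + (3 / 2 * Real.exp (-x) / (2 * m)) * Real.exp x := by
        rw [hFeq, Summable.tsum_add ((summabs x hx0).mul_left _)
          ((Real.summable_pow_div_factorial x).mul_left _), tsum_mul_left, tsum_mul_left, t0]
    _ ≤ (Real.exp (-x) / (2 * m)) * (c * Real.exp x)
        + (3 / 2 * Real.exp (-x) / (2 * m)) * Real.exp x := by
        have h0 : (0:ℝ) ≤ Real.exp (-x) / (2 * m) :=
          (div_pos (Real.exp_pos _) (by linarith)).le
        exact add_le_add_left (mul_le_mul_of_nonneg_left (sumabs_le x hx0) h0) _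
    _ = (c + 3 / 2) / (2 * m) := by
        rw [Real.exp_neg]
        field_simp
    _ ≤ (c + 3 / 2) / (2 * (x / 4)) := by
        gcongr
    _ = 2 / c + 3 / x := by
        rw [← hcc]
        field_simp
        ring

theorem stmt11 (t : ℝ) (ht : 0 < t) :
    Filter.Tendsto (fun l : ℝ =>
        ∑' n : ℕ, |(n : ℝ) / ((2 * l * t - 1 + Real.exp (-(2 * l * t))) / 4) - 1| *
          (((l * t) ^ (2 * n) / ((2 * n).factorial : ℝ)
            + (l * t) ^ (2 * n + 1) / ((2 * n + 1).factorial : ℝ)) * Real.exp (-(l * t))))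
      Filter.atTop (nhds 0) := by
  have hsq : Tendsto Real.sqrt atTop atTop := by
    rw [tendsto_atTop_atTop]
    intro b
    refine ⟨(max b 0) ^ 2, fun a ha => ?_⟩
    have h1 : max b 0 ≤ Real.sqrt a := by
      rw [show max b 0 = Real.sqrt ((max b 0) ^ 2) by
        rw [Real.sqrt_sq (le_max_right b 0)]]
      exact Real.sqrt_le_sqrt ha
    exact (le_max_left b 0).trans h1
  have h1 : Tendsto (fun l : ℝ => l * t) atTop atTop :=
    Tendsto.atTop_mul_const ht tendsto_id
  have hb : Tendsto (fun l : ℝ => 2 / Real.sqrt (l * t) + 3 / (l * t)) atTop (nhds 0) := by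
    have h3 := ((hsq.comp h1).inv_tendsto_atTop).const_mul (2:ℝ)
    have h4 := (h1.inv_tendsto_atTop).const_mul (3:ℝ)
    have h5 := h3.add h4
    simp only [mul_zero, add_zero] at h5
    convert h5 using 2 with l
    simp only [Function.comp_apply, Pi.inv_apply, div_eq_mul_inv]
  refine squeeze_zero' ?_ ?_ hb
  · filter_upwards [eventually_ge_atTop (1 / t)] with l hl
    have hlt : 0 < l * t := by
      rw [div_le_iff₀ ht] at hl
      linarith
    refine tsum_nonneg fun n => ?_
    have h1 : (0:ℝ) ≤ (l * t) ^ (2 * n) / ((2 * n).factorial : ℝ) := by positivity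
    have h2 : (0:ℝ) ≤ (l * t) ^ (2 * n + 1) / ((2 * n + 1).factorial : ℝ) := by positivity
    exact mul_nonneg (abs_nonneg _) (mul_nonneg (by linarith) (Real.exp_pos _).le)
  · filter_upwards [eventually_ge_atTop (1 / t)] with l hl
    have hlt : 1 ≤ l * t := by
      rw [div_le_iff₀ ht] at hl
      linarith
    have h := key_s11 (l * t) hlt
    rw [show 2 * (l * t) = 2 * l * t by ring] at h
    exact h
end
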